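/- arXiv:2011.09836 — 2 statements merged into one kernel-verified Lean document; each statement's English description precedes it below -/
import Mathlib

section
/- For an ELI TBox T in normal form and an ABox A consistent with T, and for any concept assertion B(a) with a an individual of A: T, A ⊨ B(a) if and only if B(a) belongs to the completion A^c_T of A (the least fixpoint of the completion rules applied only to individuals of A). Moreover, T, A ⊨ r(a,b) for a,b individuals of A iff r(a,b) is already derivable from A using only the role inclusions of T. -/
structure ABox (I C R : Type) where
  conc : Set (C × I)
  role : Set (R × I × I)

def ABox.Ind {I C R : Type} (A : ABox I C R) : Set I :=
  {a | (∃ c, (c, a) ∈ A.conc) ∨ (∃ r b, (r, a, b) ∈ A.role ∨ (r, b, a) ∈ A.role)}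

structure Interp (D I C R : Type) where
  ind : I → D
  concI : C → Set D
  roleI : R → Set (D × D)

def Interp.ModelOf {D I C R : Type} (M : Interp D I C R) (A : ABox I C R) : Prop :=
  (∀ p ∈ A.conc, M.ind p.2 ∈ M.concI p.1) ∧
  (∀ p ∈ A.role, (M.ind p.2.1, M.ind p.2.2) ∈ M.roleI p.1)

structure CQ (V C R : Type) (n : ℕ) where
  conc : Set (C × V)
  role : Set (R × V × V)
  ans : Fin n → V

def CQ.Match {D V C R : Type} {n : ℕ} (q : CQ V C R n)
    (cI : C → Set D) (rI : R → Set (D × D)) (f : V → D) : Prop :=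
  (∀ p ∈ q.conc, f p.2 ∈ cI p.1) ∧
  (∀ p ∈ q.role, (f p.2.1, f p.2.2) ∈ rI p.1)

/-- An abstract TBox, given by its class of models. -/
abbrev TBoxSem (C R : Type) : Type 1 :=
  ∀ D : Type, (C → Set D) → (R → Set (D × D)) → Prop

def ConsistentWith {I C R : Type} (T : TBoxSem C R) (A : ABox I C R) : Prop :=
  ∃ (D : Type) (M : Interp D I C R), T D M.concI M.roleI ∧ M.ModelOf A

/-- `a` is a certain answer to the OMQ `(T, q)` on the ABox `A`. -/
def CertAns {I C R V : Type} {n : ℕ} (T : TBoxSem C R) (A : ABox I C R)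
    (q : CQ V C R n) (a : Fin n → I) : Prop :=
  ∀ (D : Type) (M : Interp D I C R), T D M.concI M.roleI → M.ModelOf A →
    ∃ f : V → D, q.Match M.concI M.roleI f ∧ ∀ i, f (q.ans i) = M.ind (a i)

/-- The concept assertion `B(a)` is entailed by `T` and `A`. -/
def CertConc {I C R : Type} (T : TBoxSem C R) (A : ABox I C R) (B : C) (a : I) : Prop :=
  ∀ (D : Type) (M : Interp D I C R), T D M.concI M.roleI → M.ModelOf A →
    M.ind a ∈ M.concI B

/-- A role: a role name or an inverse role. -/
inductive DLRole (R : Type) : Type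
  | name : R → DLRole R
  | inv : R → DLRole R

def roleExt {R D : Type} (rI : R → Set (D × D)) : DLRole R → Set (D × D)
  | .name r => rI r
  | .inv r => {p | (p.2, p.1) ∈ rI r}

/-- Role assertions of an ABox, for possibly inverse roles. -/
def ABox.rext {I C R : Type} (A : ABox I C R) : DLRole R → I → I → Prop
  | .name r, a, b => (r, a, b) ∈ A.role
  | .inv r, a, b => (r, b, a) ∈ A.role

/-- ELIHF⊥ TBox axioms in normal form:
`A ⊑ ⊥`, `A ⊑ ∃r.B`, `⊤ ⊑ A`, `B₁ ⊓ B₂ ⊑ A`, `∃r.B ⊑ A`,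
functionality assertions and role inclusions. -/
inductive NAx (C R : Type) : Type
  | subBot : C → NAx C R
  | subEx : C → DLRole R → C → NAx C R
  | topSub : C → NAx C R
  | conjSub : C → C → C → NAx C R
  | exSub : DLRole R → C → C → NAx C R
  | func : DLRole R → NAx C R
  | ri : DLRole R → DLRole R → NAx C R

def NAx.Sat {C R D : Type} (cI : C → Set D) (rI : R → Set (D × D)) : NAx C R → Prop
  | .subBot A => ∀ d, d ∉ cI A
  | .subEx A r B => ∀ d ∈ cI A, ∃ e, (d, e) ∈ roleExt rI r ∧ e ∈ cI B
  | .topSub A => ∀ d, d ∈ cI A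
  | .conjSub B1 B2 A => ∀ d, d ∈ cI B1 → d ∈ cI B2 → d ∈ cI A
  | .exSub r B A => ∀ d e, (d, e) ∈ roleExt rI r → e ∈ cI B → d ∈ cI A
  | .func r => ∀ d e e', (d, e) ∈ roleExt rI r → (d, e') ∈ roleExt rI r → e = e'
  | .ri r s => ∀ p ∈ roleExt rI r, p ∈ roleExt rI s

abbrev NTBox (C R : Type) : Type := List (NAx C R)

def NTBox.sem {C R : Type} (T : NTBox C R) : TBoxSem C R :=
  fun _ cI rI => ∀ ax ∈ T, NAx.Sat cI rI ax

/-- An `ELI` axiom in normal form: no functionality assertions, no role inclusions. -/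
def NAx.IsELI {C R : Type} : NAx C R → Prop
  | .func _ => False
  | .ri _ _ => False
  | _ => True

/-- Derivability of concept assertions at individuals of `A` via the completion rules
(the last rule is rule (vii): local semantic entailment from already derived assertions). -/
inductive CompDer {I C R : Type} (T : NTBox C R) (A : ABox I C R) : C → I → Prop
  | base {B : C} {a : I} : (B, a) ∈ A.conc → CompDer T A B a
  | top {B : C} {a : I} : NAx.topSub B ∈ T → a ∈ A.Ind → CompDer T A B a
  | conj {B₁ B₂ B : C} {a : I} : NAx.conjSub B₁ B₂ B ∈ T →
      CompDer T A B₁ a → CompDer T A B₂ a → CompDer T A B a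
  | exl {r : DLRole R} {B B' : C} {a b : I} : NAx.exSub r B B' ∈ T →
      A.rext r a b → CompDer T A B b → CompDer T A B' a
  | loc {B : C} {a : I} (S : Set C) : a ∈ A.Ind →
      (∀ B' ∈ S, CompDer T A B' a) →
      (∀ (D : Type) (cI : C → Set D) (rI : R → Set (D × D)),
        (∀ ax ∈ T, NAx.Sat cI rI ax) →
        ∀ d : D, (∀ B' ∈ S, d ∈ cI B') → d ∈ cI B) →
      CompDer T A B a

section Aux

variable {I C R : Type}

/-- Inverse of a (possibly inverse) role. -/
def invRole : DLRole R → DLRole R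
  | .name r => .inv r
  | .inv r => .name r

@[simp] lemma invRole_invRole (t : DLRole R) : invRole (invRole t) = t := by
  cases t <;> rfl

lemma roleExt_invRole {D : Type} (rI : R → Set (D × D)) (t : DLRole R) (x y : D) :
    (x, y) ∈ roleExt rI (invRole t) ↔ (y, x) ∈ roleExt rI t := by
  cases t <;> simp [invRole, roleExt]

/-- Semantic closure of a set of concepts relative to `T`. -/
def cl (T : NTBox C R) (S : Set C) : Set C :=
  {B | ∀ (D : Type) (cI : C → Set D) (rI : R → Set (D × D)),
    (∀ ax ∈ T, NAx.Sat cI rI ax) → ∀ d : D, (∀ B' ∈ S, d ∈ cI B') → d ∈ cI B}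

lemma subset_cl (T : NTBox C R) (S : Set C) : S ⊆ cl T S := by
  intro B hB D cI rI _ d hd; exact hd B hB

lemma cl_mono (T : NTBox C R) {S S' : Set C} (h : S ⊆ S') : cl T S ⊆ cl T S' := by
  intro B hB D cI rI hT d hd
  exact hB D cI rI hT d (fun B' hB' => hd B' (h hB'))

lemma cl_cl (T : NTBox C R) (S : Set C) : cl T (cl T S) ⊆ cl T S := by
  intro B hB D cI rI hT d hd
  exact hB D cI rI hT d (fun B' hB' => hB' D cI rI hT d hd)

/-- A model point satisfying `S` satisfies `cl T S`. -/
lemma sat_cl (T : NTBox C R) (S : Set C) {D : Type} {cI : C → Set D}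
    {rI : R → Set (D × D)} (hT : ∀ ax ∈ T, NAx.Sat cI rI ax) {d : D}
    (hd : ∀ B' ∈ S, d ∈ cI B') : ∀ B ∈ cl T S, d ∈ cI B := by
  intro B hB; exact hB D cI rI hT d hd

lemma compDer_ind {T : NTBox C R} {A : ABox I C R} {B : C} {a : I}
    (h : CompDer T A B a) : a ∈ A.Ind := by
  induction h with
  | base h => exact Or.inl ⟨_, h⟩
  | top _ h => exact h
  | conj _ _ _ ih _ => exact ih
  | @exl r B0 B' a0 b hax hr hder ih =>
      cases r with
      | name s => exact Or.inr ⟨s, b, Or.inl hr⟩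
      | inv s => exact Or.inr ⟨s, b, Or.inr hr⟩
  | loc S hInd hder hsem ih => exact hInd

lemma rext_snd_ind {A : ABox I C R} {t : DLRole R} {a b : I}
    (h : A.rext t a b) : b ∈ A.Ind := by
  cases t with
  | name s => exact Or.inr ⟨s, a, Or.inr h⟩
  | inv s => exact Or.inr ⟨s, a, Or.inl h⟩

/-- Soundness of the completion rules. -/
lemma compDer_sound {T : NTBox C R} {A : ABox I C R} {B : C} {a : I}
    (h : CompDer T A B a) {D : Type} (M : Interp D I C R)
    (hT : ∀ ax ∈ T, NAx.Sat M.concI M.roleI ax) (hM : M.ModelOf A) :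
    M.ind a ∈ M.concI B := by
  induction h with
  | base h => exact hM.1 _ h
  | top hax _ => exact hT _ hax _
  | conj hax _ _ ih1 ih2 => exact hT _ hax _ ih1 ih2
  | @exl r B0 B' a0 b hax hr hder ih =>
      refine hT _ hax _ (M.ind b) ?_ ih
      cases r with
      | name s => exact hM.2 (s, a0, b) hr
      | inv s => exact hM.2 (s, b, a0) hr
  | @loc B0 a0 S hInd hder hsem ih =>
      exact hsem D M.concI M.roleI hT (M.ind a0) ih

lemma cl_empty_der {T : NTBox C R} {A : ABox I C R} {a : I} (ha : a ∈ A.Ind) :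
    ∀ B ∈ cl T (∅ : Set C), CompDer T A B a := by
  intro B hB
  exact CompDer.loc ∅ ha (by intro B' h; exact absurd h (Set.notMem_empty B'))
    (by intro D cI rI hT d _; exact hB D cI rI hT d (by intro B' h; exact absurd h (Set.notMem_empty B')))

/-- Concepts "pulled down" from parent type `S` across an edge labelled `t`. -/
def pull (T : NTBox C R) (t : DLRole R) (S : Set C) : Set C :=
  {B : C | ∃ B', NAx.exSub (invRole t) B' B ∈ T ∧ B' ∈ S}

def Act (T : NTBox C R) (S : Set C) (t : DLRole R) (B : C) : Prop :=
  ∃ A₀, NAx.subEx A₀ t B ∈ T ∧ A₀ ∈ S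

open Classical in
/-- The type of a node of the canonical model (list is the reversed path). -/
noncomputable def typ (T : NTBox C R) (A : ABox I C R) (a : I) :
    List (DLRole R × C) → Set C
  | [] => {B | CompDer T A B a} ∪ cl T ∅
  | (t, B) :: l =>
      if Act T (typ T A a l) t B then cl T ({B} ∪ pull T t (typ T A a l))
      else cl T ∅

lemma typ_closed (T : NTBox C R) (A : ABox I C R) (a : I)
    (l : List (DLRole R × C)) : cl T (typ T A a l) ⊆ typ T A a l := by
  cases l with
  | nil =>
      by_cases ha : a ∈ A.Ind
      · intro B hB
        left
        refine CompDer.loc (typ T A a []) ha ?_ ?_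
        · intro B' hB'
          cases hB' with
          | inl h => exact h
          | inr h => exact cl_empty_der ha B' h
        · intro D cI rI hT d hd; exact hB D cI rI hT d hd
      · have he : typ T A a [] = cl T ∅ := by
          show ({B | CompDer T A B a} ∪ cl T ∅ : Set C) = cl T ∅
          have : {B | CompDer T A B a} = (∅ : Set C) := by
            ext B; simp only [Set.mem_setOf_eq, Set.mem_empty_iff_false, iff_false]
            intro h; exact ha (compDer_ind h)
          rw [this, Set.empty_union]
        rw [he]; exact cl_cl T ∅
  | cons tb l =>
      obtain ⟨t, B⟩ := tb
      show cl T (typ T A a ((t, B) :: l)) ⊆ typ T A a ((t, B) :: l)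
      by_cases h : Act T (typ T A a l) t B
      · simp only [typ, if_pos h]; exact cl_cl T _
      · simp only [typ, if_neg h]; exact cl_cl T _

lemma cl_empty_sub_typ (T : NTBox C R) (A : ABox I C R) (a : I)
    (l : List (DLRole R × C)) : cl T (∅ : Set C) ⊆ typ T A a l := by
  cases l with
  | nil => exact fun B hB => Or.inr hB
  | cons tb l =>
      obtain ⟨t, B⟩ := tb
      by_cases h : Act T (typ T A a l) t B
      · simp only [typ, if_pos h]
        exact cl_mono T (Set.empty_subset _)
      · simp only [typ, if_neg h]
        exact fun _ hh => hh

/-- Every node type is realized in any model of `T` and `A`. -/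
lemma typ_realized (T : NTBox C R) (A : ABox I C R) {D : Type}
    (M : Interp D I C R) (hT : ∀ ax ∈ T, NAx.Sat M.concI M.roleI ax)
    (hM : M.ModelOf A) (a : I) (l : List (DLRole R × C)) :
    ∃ x : D, ∀ B ∈ typ T A a l, x ∈ M.concI B := by
  induction l with
  | nil =>
      refine ⟨M.ind a, ?_⟩
      intro B hB
      cases hB with
      | inl h => exact compDer_sound h M hT hM
      | inr h => exact h D M.concI M.roleI hT (M.ind a) (by intro B' h'; exact absurd h' (Set.notMem_empty B'))
  | cons tb l ih =>
      obtain ⟨t, B⟩ := tb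
      obtain ⟨x, hx⟩ := ih
      by_cases h : Act T (typ T A a l) t B
      · obtain ⟨A₀, hax, hA₀⟩ := h
        obtain ⟨y, hxy, hyB⟩ := hT _ hax x (hx A₀ hA₀)
        refine ⟨y, ?_⟩
        have hbase : ∀ B' ∈ ({B} ∪ pull T t (typ T A a l) : Set C), y ∈ M.concI B' := by
          intro B' hB'
          cases hB' with
          | inl h' => cases h'; exact hyB
          | inr h' =>
              obtain ⟨B'', hax', hB''⟩ := h'
              refine hT _ hax' y x ?_ (hx B'' hB'')
              exact (roleExt_invRole M.roleI t y x).mpr hxy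
        intro B' hB'
        have hact : Act T (typ T A a l) t B := ⟨A₀, hax, hA₀⟩
        have : B' ∈ cl T ({B} ∪ pull T t (typ T A a l)) := by
          simpa only [typ, if_pos hact] using hB'
        exact sat_cl T _ hT hbase B' this
      · refine ⟨M.ind a, ?_⟩
        intro B' hB'
        have : B' ∈ cl T (∅ : Set C) := by simpa only [typ, if_neg h] using hB'
        exact this D M.concI M.roleI hT (M.ind a)
          (by intro B'' h'; exact absurd h' (Set.notMem_empty B''))

/-- Tree edges of the canonical model. -/
def TE (T : NTBox C R) (A : ABox I C R) (d e : I × List (DLRole R × C))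
    (t : DLRole R) : Prop :=
  ∃ B, e = (d.1, (t, B) :: d.2) ∧ Act T (typ T A d.1 d.2) t B

/-- The canonical model. -/
noncomputable def Kan (T : NTBox C R) (A : ABox I C R) :
    Interp (I × List (DLRole R × C)) I C R where
  ind a := (a, [])
  concI B := {d | B ∈ typ T A d.1 d.2}
  roleI r := {p | TE T A p.1 p.2 (.name r) ∨ TE T A p.2 p.1 (.inv r) ∨
    (p.1.2 = [] ∧ p.2.2 = [] ∧ (r, p.1.1, p.2.1) ∈ A.role)}

lemma Kan_roleExt (T : NTBox C R) (A : ABox I C R) (s : DLRole R)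
    (d e : I × List (DLRole R × C)) :
    (d, e) ∈ roleExt (Kan T A).roleI s ↔
      TE T A d e s ∨ TE T A e d (invRole s) ∨
        (d.2 = [] ∧ e.2 = [] ∧ A.rext s d.1 e.1) := by
  cases s with
  | name r =>
      show _ ∈ (Kan T A).roleI r ↔ _
      simp only [Kan, Set.mem_setOf_eq, invRole, ABox.rext]
  | inv r =>
      show (e, d) ∈ (Kan T A).roleI r ↔ _
      simp only [Kan, Set.mem_setOf_eq, invRole, ABox.rext]
      constructor
      · rintro (h | h | ⟨h1, h2, h3⟩)
        · exact Or.inr (Or.inl h)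
        · exact Or.inl h
        · exact Or.inr (Or.inr ⟨h2, h1, h3⟩)
      · rintro (h | h | ⟨h1, h2, h3⟩)
        · exact Or.inr (Or.inl h)
        · exact Or.inl h
        · exact Or.inr (Or.inr ⟨h2, h1, h3⟩)

lemma Kan_modelOf (T : NTBox C R) (A : ABox I C R) : (Kan T A).ModelOf A := by
  constructor
  · intro p hp
    show p.1 ∈ typ T A p.2 []
    exact Or.inl (CompDer.base (by cases p; exact hp))
  · intro p hp
    exact Or.inr (Or.inr ⟨rfl, rfl, by cases p with | mk r q => cases q; exact hp⟩)

lemma Kan_sat (T : NTBox C R) (hELI : ∀ ax ∈ T, NAx.IsELI ax)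
    (A : ABox I C R) (hcons : ConsistentWith (NTBox.sem T) A) :
    ∀ ax ∈ T, NAx.Sat (Kan T A).concI (Kan T A).roleI ax := by
  obtain ⟨D, M, hTM, hMA⟩ := hcons
  intro ax hax
  have hsatM : ∀ ax ∈ T, NAx.Sat M.concI M.roleI ax := hTM
  cases ax with
  | subBot A₀ =>
      intro d hd
      obtain ⟨x, hx⟩ := typ_realized T A M hsatM hMA d.1 d.2
      exact hsatM _ hax x (hx A₀ hd)
  | subEx A₀ t B =>
      intro d hd
      have hact : Act T (typ T A d.1 d.2) t B := ⟨A₀, hax, hd⟩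
      refine ⟨(d.1, (t, B) :: d.2), ?_, ?_⟩
      · refine (Kan_roleExt T A t d _).mpr (Or.inl ⟨B, rfl, hact⟩)
      · show B ∈ typ T A d.1 ((t, B) :: d.2)
        simp only [typ, if_pos hact]
        exact subset_cl T _ (Or.inl rfl)
  | topSub A₀ =>
      intro d
      have : A₀ ∈ cl T (∅ : Set C) := by
        intro D' cI rI hT x _; exact hT _ hax x
      exact cl_empty_sub_typ T A d.1 d.2 this
  | conjSub B1 B2 A₀ =>
      intro d h1 h2
      refine typ_closed T A d.1 d.2 ?_
      intro D' cI rI hT x hx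
      exact hT _ hax x (hx B1 h1) (hx B2 h2)
  | exSub s B' A₀ =>
      intro d e hde hB'
      rcases (Kan_roleExt T A s d e).mp hde with h | h | ⟨hd2, he2, hr⟩
      · -- e is an s-child of d
        obtain ⟨B, he, hact⟩ := h
        have htypE : typ T A e.1 e.2 = cl T ({B} ∪ pull T s (typ T A d.1 d.2)) := by
          rw [he]; simp only [typ, if_pos hact]
        refine typ_closed T A d.1 d.2 ?_
        intro D' cI rI hT x hx
        obtain ⟨A₁, hax1, hA₁⟩ := hact
        obtain ⟨y, hxy, hyB⟩ := hT _ hax1 x (hx A₁ hA₁)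
        have hy : ∀ B'' ∈ ({B} ∪ pull T s (typ T A d.1 d.2) : Set C), y ∈ cI B'' := by
          intro B'' hB''
          cases hB'' with
          | inl hh => cases hh; exact hyB
          | inr hh =>
              obtain ⟨B₃, hax3, hB₃⟩ := hh
              exact hT _ hax3 y x ((roleExt_invRole rI s y x).mpr hxy) (hx B₃ hB₃)
        have hyB' : y ∈ cI B' := by
          have : B' ∈ cl T ({B} ∪ pull T s (typ T A d.1 d.2)) := htypE ▸ hB'
          exact sat_cl T _ hT hy B' this
        exact hT _ hax x y hxy hyB'
      · -- d is an (invRole s)-child of e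
        obtain ⟨B, hd, hact⟩ := h
        have htypD : typ T A d.1 d.2 = cl T ({B} ∪ pull T (invRole s) (typ T A e.1 e.2)) := by
          rw [hd]; simp only [typ, if_pos hact]
        show A₀ ∈ typ T A d.1 d.2
        rw [htypD]
        refine subset_cl T _ (Or.inr ?_)
        exact ⟨B', by rw [invRole_invRole]; exact hax, hB'⟩
      · -- ABox edge
        obtain ⟨a1, l1⟩ := d
        obtain ⟨b1, l2⟩ := e
        simp only at hd2 he2
        subst hd2; subst he2
        have hbInd : b1 ∈ A.Ind := rext_snd_ind hr
        have hB2 : B' ∈ typ T A b1 [] := hB'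
        have hB'der : CompDer T A B' b1 := by
          rcases hB2 with hh | hh
          · exact hh
          · exact cl_empty_der hbInd B' hh
        show A₀ ∈ typ T A a1 []
        exact Or.inl (CompDer.exl hax hr hB'der)
  | func t => exact absurd (hELI _ hax) (by simp [NAx.IsELI])
  | ri t s => exact absurd (hELI _ hax) (by simp [NAx.IsELI])

end Aux

/-- for an `ELI` TBox in normal form and a consistent ABox, entailed concept
assertions over ABox individuals are exactly those in the completion, and entailed role
assertions are exactly those already asserted. -/
theorem completion_characterizes_entailment {I C R : Type}
    (T : NTBox C R) (hELI : ∀ ax ∈ T, NAx.IsELI ax)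
    (A : ABox I C R) (hcons : ConsistentWith (NTBox.sem T) A) :
    (∀ (B : C) (a : I), a ∈ A.Ind →
      (CertConc (NTBox.sem T) A B a ↔ CompDer T A B a)) ∧
    (∀ (r : R) (a b : I), a ∈ A.Ind → b ∈ A.Ind →
      ((∀ (D : Type) (M : Interp D I C R), NTBox.sem T D M.concI M.roleI →
          M.ModelOf A → (M.ind a, M.ind b) ∈ M.roleI r) ↔ (r, a, b) ∈ A.role)) := by
  have hKsat := Kan_sat T hELI A hcons
  have hKA := Kan_modelOf T A
  constructor
  · intro B a ha
    constructor
    · intro hc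
      have h := hc _ (Kan T A) hKsat hKA
      rcases h with h | h
      · exact h
      · exact cl_empty_der ha B h
    · intro hd D M hT hM
      exact compDer_sound hd M hT hM
  · intro r a b _ _
    constructor
    · intro h
      have h2 := h _ (Kan T A) hKsat hKA
      rcases h2 with ⟨B, he, _⟩ | ⟨B, he, _⟩ | ⟨_, _, hr⟩
      · simp [Kan] at he
      · simp [Kan] at he
      · exact hr
    · intro h D M _ hM
      exact hM.2 (r, a, b) h
end

section
/- Let T_c be an ELI TBox over signature Σ_c ∪ {A*} (A* ∉ Σ_c) such that for some fixed problem instance: there is an ABox A and individual a with T_c, A ⊨ A*(a) and T_c, A ⊭ q_c(a) iff the instance is positive. Extend T_c to T by adding ∃r.A ⊑ A and A ⊓ A* ⊑ C_{q_c}, with A, r fresh and C_{q_c} an ELI concept such that d ∈ C_{q_c}^I implies I ⊨ q_c(d). Then: if the instance is positive, the OMQ (T, Σ_c ∪ {A,r}, q_c) is not FO-rewritable, as witnessed by the family of ABoxes A_k obtained by attaching to the root a₀ of a tree-shaped witness A an r-path a₀ r a₁ r ... r a_k with A(a_k): each A_k entails q_c(a₀) but its truncation A_k|≤k−1 does not.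 -/
structure Sig (C R : Type) where
  concs : Set C
  roles : Set R

def ABox.InSig {I C R : Type} (A : ABox I C R) (s : Sig C R) : Prop :=
  (∀ p ∈ A.conc, p.1 ∈ s.concs) ∧ (∀ p ∈ A.role, p.1 ∈ s.roles)

/-- An ABox viewed as an interpretation: concept name extensions. -/
def ABox.concI {I C R : Type} (A : ABox I C R) : C → Set I :=
  fun c => {a | (c, a) ∈ A.conc}

/-- An ABox viewed as an interpretation: role name extensions. -/
def ABox.roleI {I C R : Type} (A : ABox I C R) : R → Set (I × I) :=
  fun r => {p | (r, p.1, p.2) ∈ A.role}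

/-- First-order formulas over unary predicates `C`, binary predicates `R`, variables `X`. -/
inductive FO (X C R : Type) : Type
  | eq : X → X → FO X C R
  | cn : C → X → FO X C R
  | rl : R → X → X → FO X C R
  | fal : FO X C R
  | imp : FO X C R → FO X C R → FO X C R
  | all : X → FO X C R → FO X C R

def FO.Sat {X C R D : Type} [DecidableEq X]
    (cI : C → Set D) (rI : R → Set (D × D)) : FO X C R → (X → D) → Prop
  | .eq x y, v => v x = v y
  | .cn c x, v => v x ∈ cI c
  | .rl r x y, v => (v x, v y) ∈ rI r
  | .fal, _ => False
  | .imp φ ψ, v => FO.Sat cI rI φ v → FO.Sat cI rI ψ v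
  | .all x φ, v => ∀ d : D, FO.Sat cI rI φ (Function.update v x d)

/-- Quantifier rank. -/
def FO.qr {X C R : Type} : FO X C R → ℕ
  | .eq _ _ => 0
  | .cn _ _ => 0
  | .rl _ _ _ => 0
  | .fal => 0
  | .imp φ ψ => max (FO.qr φ) (FO.qr ψ)
  | .all _ φ => FO.qr φ + 1

/-- Free variables. -/
def FO.free {X C R : Type} [DecidableEq X] : FO X C R → Finset X
  | .eq x y => {x, y}
  | .cn _ x => {x}
  | .rl _ x y => {x, y}
  | .fal => ∅
  | .imp φ ψ => FO.free φ ∪ FO.free ψ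
  | .all x φ => (FO.free φ).erase x

def FO.InSig {X C R : Type} (s : Sig C R) : FO X C R → Prop
  | .eq _ _ => True
  | .cn c _ => c ∈ s.concs
  | .rl r _ _ => r ∈ s.roles
  | .fal => True
  | .imp φ ψ => FO.InSig s φ ∧ FO.InSig s ψ
  | .all _ φ => FO.InSig s φ

/-- `φ` is an FO-rewriting of the OMQ `(T, s, q)` (over `Σ`-ABoxes consistent with `T`). -/
def IsFORewriting {I C R V : Type} {n : ℕ} (T : TBoxSem C R) (s : Sig C R)
    (q : CQ V C R n) (φ : FO ℕ C R) : Prop :=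
  FO.InSig s φ ∧
  ∀ A : ABox I C R, A.InSig s → ConsistentWith T A →
    ∀ a : Fin n → I, CertAns T A q a ↔
      ∀ v : ℕ → I, (∀ i : Fin n, v i.1 = a i) → FO.Sat A.concI A.roleI φ v

def FORewritable (I : Type) {C R V : Type} {n : ℕ} (T : TBoxSem C R) (s : Sig C R)
    (q : CQ V C R n) : Prop :=
  ∃ φ : FO ℕ C R, IsFORewriting (I := I) T s q φ

def CQ.vars {V C R : Type} {n : ℕ} (q : CQ V C R n) : Set V :=
  {x | (∃ c, (c, x) ∈ q.conc) ∨ (∃ r y, (r, x, y) ∈ q.role ∨ (r, y, x) ∈ q.role)} ∪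
    Set.range q.ans

def CQ.adj {V C R : Type} {n : ℕ} (q : CQ V C R n) (x y : V) : Prop :=
  ∃ r, (r, x, y) ∈ q.role ∨ (r, y, x) ∈ q.role

def CQ.Connected {V C R : Type} {n : ℕ} (q : CQ V C R n) : Prop :=
  ∀ x ∈ q.vars, ∀ y ∈ q.vars, Relation.ReflTransGen q.adj x y

/-- `ELI` concepts. -/
inductive ELC (C R : Type) : Type
  | top : ELC C R
  | name : C → ELC C R
  | inter : ELC C R → ELC C R → ELC C R
  | ex : DLRole R → ELC C R → ELC C R

def ELC.ext {C R D : Type} (cI : C → Set D) (rI : R → Set (D × D)) : ELC C R → Set D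
  | .top => Set.univ
  | .name A => cI A
  | .inter c d => ELC.ext cI rI c ∩ ELC.ext cI rI d
  | .ex r c => {d | ∃ e, (d, e) ∈ roleExt rI r ∧ e ∈ ELC.ext cI rI c}

/-- A pseudo tree ABox: a core together with trees attached at core individuals. -/
structure PseudoTree (I C R : Type) extends ABox I C R where
  core : Set I
  parent : I → I
  depth : I → ℕ
  depth_zero : ∀ a, depth a = 0 ↔ a ∈ core
  parent_depth : ∀ a, depth a ≠ 0 → depth (parent a) + 1 = depth a
  edge_ok : ∀ r a b, (r, a, b) ∈ role →
    (a ∈ core ∧ b ∈ core) ∨ parent a = b ∨ parent b = a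
  single_edge : ∀ a, depth a ≠ 0 →
    Set.Subsingleton {p : R × Bool |
      (p.2 = true ∧ (p.1, parent a, a) ∈ role) ∨ (p.2 = false ∧ (p.1, a, parent a) ∈ role)}

/-- The restriction `A|_{≤ k}` of a pseudo tree ABox to individuals of depth at most `k`. -/
def PseudoTree.restrict {I C R : Type} (A : PseudoTree I C R) (k : ℕ) : ABox I C R where
  conc := {p ∈ A.conc | A.depth p.2 ≤ k}
  role := {p ∈ A.role | A.depth p.2.1 ≤ k ∧ A.depth p.2.2 ≤ k}

abbrev GTBox (C R : Type) : Type := List (ELC C R × ELC C R)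

def GTBox.sem {C R : Type} (T : GTBox C R) : TBoxSem C R :=
  fun _ cI rI => ∀ p ∈ T, ELC.ext cI rI p.1 ⊆ ELC.ext cI rI p.2

def DLRole.base {R : Type} : DLRole R → R
  | .name r => r
  | .inv r => r

def ELC.cnames {C R : Type} : ELC C R → Set C
  | .top => ∅
  | .name A => {A}
  | .inter c d => ELC.cnames c ∪ ELC.cnames d
  | .ex _ c => ELC.cnames c

def ELC.rnames {C R : Type} : ELC C R → Set R
  | .top => ∅
  | .name _ => ∅
  | .inter c d => ELC.rnames c ∪ ELC.rnames d
  | .ex r c => insert (DLRole.base r) (ELC.rnames c)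

def GTBox.cnames {C R : Type} (T : GTBox C R) : Set C :=
  {c | ∃ p ∈ T, c ∈ ELC.cnames p.1 ∪ ELC.cnames p.2}

def GTBox.rnames {C R : Type} (T : GTBox C R) : Set R :=
  {r | ∃ p ∈ T, r ∈ ELC.rnames p.1 ∪ ELC.rnames p.2}

section AuxLemmas

open Classical

variable {I C R V D : Type}

lemma elc_full (cI : C → Set D) (rI : R → Set (D × D)) (x : D)
    (hc : ∀ c, x ∈ cI c) (hr : ∀ r, (x, x) ∈ rI r) :
    ∀ Cn : ELC C R, x ∈ ELC.ext cI rI Cn := by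
  intro Cn
  induction Cn with
  | top => trivial
  | name A => exact hc A
  | inter c d ih1 ih2 => exact ⟨ih1, ih2⟩
  | ex r c ih =>
    refine ⟨x, ?_, ih⟩
    cases r with
    | name r => exact hr r
    | inv r => exact hr r

lemma consistent_any (T : GTBox C R) (A : ABox I C R) :
    ConsistentWith (GTBox.sem T) A := by
  refine ⟨PUnit, ⟨fun _ => PUnit.unit, fun _ => Set.univ, fun _ => Set.univ⟩, ?_, ?_, ?_⟩
  · intro p _ x _
    exact elc_full _ _ _ (fun _ => Set.mem_univ _) (fun _ => Set.mem_univ _) p.2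
  · intro p _; trivial
  · intro p _; trivial

lemma elc_ext_congr (cI cI' : C → Set D) (rI rI' : R → Set (D × D)) (Cn : ELC C R)
    (hc : ∀ c ∈ Cn.cnames, cI c = cI' c) (hr : ∀ r ∈ Cn.rnames, rI r = rI' r) :
    ELC.ext cI rI Cn = ELC.ext cI' rI' Cn := by
  induction Cn with
  | top => rfl
  | name A => exact hc A (by simp [ELC.cnames])
  | inter c d ih1 ih2 =>
    have h1 := ih1 (fun c hc' => hc c (Or.inl hc')) (fun r hr' => hr r (Or.inl hr'))
    have h2 := ih2 (fun c hc' => hc c (Or.inr hc')) (fun r hr' => hr r (Or.inr hr'))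
    show ELC.ext cI rI c ∩ _ = _
    rw [h1, h2]; rfl
  | ex r c ih =>
    have h1 := ih hc (fun r' hr' => hr r' (by simp [ELC.rnames]; exact Or.inr hr'))
    have h2 : roleExt rI r = roleExt rI' r := by
      cases r with
      | name r => exact hr r (by simp [ELC.rnames, DLRole.base])
      | inv r =>
        have h := hr r (by simp [ELC.rnames, DLRole.base])
        show {p : D × D | (p.2, p.1) ∈ rI r} = {p : D × D | (p.2, p.1) ∈ rI' r}
        rw [h]
    show {d | ∃ e, (d, e) ∈ roleExt rI r ∧ e ∈ ELC.ext cI rI c} = _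
    rw [h1, h2]; rfl

lemma gtbox_mem_cnames {T : GTBox C R} {p : ELC C R × ELC C R} (hp : p ∈ T) :
    ∀ c, (c ∈ p.1.cnames ∨ c ∈ p.2.cnames) → c ∈ GTBox.cnames T :=
  fun c hc => ⟨p, hp, hc⟩

lemma gtbox_mem_rnames {T : GTBox C R} {p : ELC C R × ELC C R} (hp : p ∈ T) :
    ∀ r, (r ∈ p.1.rnames ∨ r ∈ p.2.rnames) → r ∈ GTBox.rnames T :=
  fun r hr => ⟨p, hp, hr⟩

end AuxLemmas
section CertLemmas

variable {I C R V : Type}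

lemma cert_pos
    (Tc : GTBox C R) (q : CQ V C R 1) (Astar AA : C) (rr : R) (Cq : ELC C R)
    (hCq : ∀ (D : Type) (cI : C → Set D) (rI : R → Set (D × D)) (d : D),
      d ∈ ELC.ext cI rI Cq → ∃ f : V → D, q.Match cI rI f ∧ f (q.ans 0) = d)
    (T : GTBox C R)
    (hT : T = (ELC.ex (DLRole.name rr) (ELC.name AA), ELC.name AA) ::
              (ELC.inter (ELC.name AA) (ELC.name Astar), Cq) :: Tc)
    (W : ABox I C R) (a₀ : I)
    (hWpos : CertConc (GTBox.sem Tc) W Astar a₀)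
    (path : ℕ → I) (hpath0 : path 0 = a₀)
    (B : ABox I C R) (hBc : W.conc ⊆ B.conc) (hBr : W.role ⊆ B.role)
    (k : ℕ) (hAAk : (AA, path k) ∈ B.conc)
    (hE : ∀ i, i < k → (rr, path i, path (i + 1)) ∈ B.role) :
    CertAns (GTBox.sem T) B q (fun _ => a₀) := by
  intro D M hM hMB
  have hTc : GTBox.sem Tc D M.concI M.roleI := by
    intro p hp
    exact hM p (by rw [hT]; exact List.mem_cons_of_mem _ (List.mem_cons_of_mem _ hp))
  have hMW : M.ModelOf W := ⟨fun p hp => hMB.1 p (hBc hp), fun p hp => hMB.2 p (hBr hp)⟩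
  have hCI1 := hM _ (by rw [hT]; exact List.mem_cons_self)
  have hCI2 := hM _ (by rw [hT]; exact List.mem_cons_of_mem _ (List.mem_cons_self))
  have hdown : ∀ i, i ≤ k → M.ind (path (k - i)) ∈ M.concI AA := by
    intro i
    induction i with
    | zero =>
      intro _
      simpa using hMB.1 (AA, path k) hAAk
    | succ n ih =>
      intro hn
      have h1 : k - (n+1) < k := by omega
      have h2 : k - (n+1) + 1 = k - n := by omega
      have hedge := hMB.2 _ (hE (k - (n+1)) h1)
      refine hCI1 ⟨M.ind (path (k - (n+1) + 1)), hedge, ?_⟩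
      rw [h2]
      exact ih (by omega)
  have hAAa : M.ind a₀ ∈ M.concI AA := by
    have := hdown k le_rfl
    simpa [hpath0] using this
  have hAst : M.ind a₀ ∈ M.concI Astar := hWpos D M hTc hMW
  have hCqa : M.ind a₀ ∈ ELC.ext M.concI M.roleI Cq := hCI2 ⟨hAAa, hAst⟩
  obtain ⟨f, hf, hf0⟩ := hCq D M.concI M.roleI _ hCqa
  refine ⟨f, hf, fun i => ?_⟩
  have : i = 0 := Subsingleton.elim i 0
  rw [this]
  exact hf0

lemma cert_neg_trunc
    (Tc : GTBox C R) (sc : Sig C R) (q : CQ V C R 1) (Astar AA : C) (rr : R) (Cq : ELC C R)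
    (hAA₁ : AA ∉ sc.concs) (hAA₂ : AA ∉ GTBox.cnames Tc) (hAA₃ : ∀ x, (AA, x) ∉ q.conc)
    (hrr₂ : rr ∉ GTBox.rnames Tc) (hrr₃ : ∀ x y, (rr, x, y) ∉ q.role)
    (T : GTBox C R)
    (hT : T = (ELC.ex (DLRole.name rr) (ELC.name AA), ELC.name AA) ::
              (ELC.inter (ELC.name AA) (ELC.name Astar), Cq) :: Tc)
    (W : ABox I C R) (a₀ : I) (hWsig : W.InSig sc)
    (hWneg : ¬ CertAns (GTBox.sem Tc) W q (fun _ => a₀))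
    (B : ABox I C R) (hBc : B.conc = W.conc)
    (hBr : ∀ p ∈ B.role, p.1 = rr ∨ p ∈ W.role) :
    ¬ CertAns (GTBox.sem T) B q (fun _ => a₀) := by
  classical
  unfold CertAns at hWneg
  push_neg at hWneg
  obtain ⟨D, M₀, hTc, hMW, hno⟩ := hWneg
  intro hca
  set M' : Interp D I C R :=
    ⟨M₀.ind, Function.update M₀.concI AA ∅, Function.update M₀.roleI rr Set.univ⟩ with hM'
  have hsem : GTBox.sem T D M'.concI M'.roleI := by
    intro p hp
    rw [hT] at hp
    rcases List.mem_cons.1 hp with h1 | hp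
    · subst h1
      intro d hd
      obtain ⟨e, _, he⟩ := hd
      have : e ∈ Function.update M₀.concI AA ∅ AA := he
      rw [Function.update_self] at this
      exact absurd this (Set.notMem_empty e)
    rcases List.mem_cons.1 hp with h2 | hp
    · subst h2
      intro d hd
      have : d ∈ Function.update M₀.concI AA ∅ AA := hd.1
      rw [Function.update_self] at this
      exact absurd this (Set.notMem_empty d)
    · have hc1 : ∀ c ∈ p.1.cnames, M'.concI c = M₀.concI c := by
        intro c hc
        have : c ≠ AA := fun h => hAA₂ (h ▸ gtbox_mem_cnames hp c (Or.inl hc))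
        exact Function.update_of_ne this _ _
      have hc2 : ∀ c ∈ p.2.cnames, M'.concI c = M₀.concI c := by
        intro c hc
        have : c ≠ AA := fun h => hAA₂ (h ▸ gtbox_mem_cnames hp c (Or.inr hc))
        exact Function.update_of_ne this _ _
      have hr1 : ∀ r ∈ p.1.rnames, M'.roleI r = M₀.roleI r := by
        intro r hr
        have : r ≠ rr := fun h => hrr₂ (h ▸ gtbox_mem_rnames hp r (Or.inl hr))
        exact Function.update_of_ne this _ _
      have hr2 : ∀ r ∈ p.2.rnames, M'.roleI r = M₀.roleI r := by
        intro r hr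
        have : r ≠ rr := fun h => hrr₂ (h ▸ gtbox_mem_rnames hp r (Or.inr hr))
        exact Function.update_of_ne this _ _
      rw [elc_ext_congr _ _ _ _ p.1 hc1 hr1, elc_ext_congr _ _ _ _ p.2 hc2 hr2]
      exact hTc p hp
  have hmod : M'.ModelOf B := by
    constructor
    · intro p hp
      rw [hBc] at hp
      have hne : p.1 ≠ AA := fun h => hAA₁ (h ▸ hWsig.1 p hp)
      show M₀.ind p.2 ∈ Function.update M₀.concI AA ∅ p.1
      rw [Function.update_of_ne hne]
      exact hMW.1 p hp
    · intro p hp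
      by_cases h : p.1 = rr
      · show _ ∈ Function.update M₀.roleI rr Set.univ p.1
        rw [h, Function.update_self]
        trivial
      · rcases hBr p hp with h' | h'
        · exact absurd h' h
        · show _ ∈ Function.update M₀.roleI rr Set.univ p.1
          rw [Function.update_of_ne h]
          exact hMW.2 p h'
  obtain ⟨f, hf, hfa⟩ := hca D M' hsem hmod
  have hmatch : q.Match M₀.concI M₀.roleI f := by
    constructor
    · intro p hp
      have hne : p.1 ≠ AA := fun h => hAA₃ p.2 (by rw [← h]; exact hp)
      have := hf.1 p hp
      rwa [show M'.concI p.1 = M₀.concI p.1 from Function.update_of_ne hne _ _] at this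
    · intro p hp
      have hne : p.1 ≠ rr := fun h => hrr₃ p.2.1 p.2.2 (by rw [← h]; exact hp)
      have := hf.2 p hp
      rwa [show M'.roleI p.1 = M₀.roleI p.1 from Function.update_of_ne hne _ _] at this
  obtain ⟨i, hi⟩ := hno f hmatch
  exact hi (hfa i)

end CertLemmas
section DetachedLemma

variable {I C R V : Type}

lemma cert_neg_detached
    (Tc : GTBox C R) (sc : Sig C R) (q : CQ V C R 1) (hconn : q.Connected)
    (Astar AA : C) (rr : R) (Cq : ELC C R)
    (hAA₁ : AA ∉ sc.concs) (hAA₂ : AA ∉ GTBox.cnames Tc) (hAA₃ : ∀ x, (AA, x) ∉ q.conc)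
    (hrr₁ : rr ∉ sc.roles) (hrr₂ : rr ∉ GTBox.rnames Tc) (hrr₃ : ∀ x y, (rr, x, y) ∉ q.role)
    (T : GTBox C R)
    (hT : T = (ELC.ex (DLRole.name rr) (ELC.name AA), ELC.name AA) ::
              (ELC.inter (ELC.name AA) (ELC.name Astar), Cq) :: Tc)
    (W : ABox I C R) (a₀ : I) (hWsig : W.InSig sc)
    (hWneg : ¬ CertAns (GTBox.sem Tc) W q (fun _ => a₀))
    (path : ℕ → I) (hpath0 : path 0 = a₀) (hpathinj : Function.Injective path)
    (hpathfresh : ∀ i : ℕ, i ≠ 0 → path i ∉ W.Ind)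
    (N : ℕ) (B : ABox I C R)
    (hBc : B.conc = W.conc ∪ {(AA, path (2*N+1))})
    (hBr : B.role = W.role ∪ {p | ∃ i < N, p = (rr, path i, path (i+1))}
                          ∪ {p | ∃ i < N, p = (rr, path (N+1+i), path (N+2+i))}) :
    ¬ CertAns (GTBox.sem T) B q (fun _ => a₀) := by
  classical
  unfold CertAns at hWneg
  push_neg at hWneg
  obtain ⟨D, M₀, hTc, hMW, hno⟩ := hWneg
  intro hca
  set yset : Set I := {a | ∃ j, N+1 ≤ j ∧ a = path j} with hyset
  have hfreshy : ∀ a ∈ W.Ind, a ∉ yset := by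
    rintro a ha ⟨j, hj, rfl⟩
    exact hpathfresh j (by omega) ha
  have ha₀y : a₀ ∉ yset := by
    rintro ⟨j, hj, hja⟩
    rw [← hpath0] at hja
    have := hpathinj hja
    omega
  set cI' : C → Set (D ⊕ Unit) :=
    fun c => (if c = AA then ∅ else Sum.inl '' M₀.concI c) ∪ {Sum.inr ()} with hcI'
  set rI' : R → Set ((D ⊕ Unit) × (D ⊕ Unit)) :=
    fun ρ => (if ρ = rr
        then {z | ∃ i, i < N ∧ z = (Sum.inl (M₀.ind (path i)), Sum.inl (M₀.ind (path (i+1))))}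
        else {z | ∃ a b, z = (Sum.inl a, Sum.inl b) ∧ (a, b) ∈ M₀.roleI ρ})
      ∪ {(Sum.inr (), Sum.inr ())} with hrI'
  set M' : Interp (D ⊕ Unit) I C R :=
    ⟨fun a => if a ∈ yset then Sum.inr () else Sum.inl (M₀.ind a), cI', rI'⟩ with hM'
  have hfull : ∀ Cn : ELC C R, Sum.inr () ∈ ELC.ext cI' rI' Cn :=
    elc_full _ _ _ (fun c => Or.inr rfl) (fun ρ => Or.inr rfl)
  have hinl : ∀ Cn : ELC C R, AA ∉ Cn.cnames → rr ∉ Cn.rnames → ∀ d : D,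
      (Sum.inl d ∈ ELC.ext cI' rI' Cn ↔ d ∈ ELC.ext M₀.concI M₀.roleI Cn) := by
    intro Cn
    induction Cn with
    | top => intro _ _ d; constructor <;> (intro; trivial)
    | name c =>
      intro hAc _ d
      have hc : c ≠ AA := fun h => hAc (by rw [h]; exact rfl)
      show Sum.inl d ∈ cI' c ↔ _
      rw [hcI']
      simp only [if_neg hc, Set.mem_union, Set.mem_image, Set.mem_singleton_iff]
      constructor
      · rintro (⟨x, hx, hxd⟩ | h)
        · rwa [← Sum.inl_injective hxd]
        · exact absurd h (by simp)
      · intro h; exact Or.inl ⟨d, h, rfl⟩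
    | inter c₁ c₂ ih1 ih2 =>
      intro hAc hrc d
      have h1 := ih1 (fun h => hAc (Or.inl h)) (fun h => hrc (Or.inl h)) d
      have h2 := ih2 (fun h => hAc (Or.inr h)) (fun h => hrc (Or.inr h)) d
      exact and_congr h1 h2
    | ex r c ih =>
      intro hAc hrc d
      have hbase : DLRole.base r ≠ rr := fun h => hrc (by rw [← h]; exact Set.mem_insert _ _)
      have hrc' : rr ∉ c.rnames := fun h => hrc (Set.mem_insert_of_mem _ h)
      have ihc := ih hAc hrc'
      cases r with
      | name r₀ =>
        have hr₀ : r₀ ≠ rr := hbase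
        constructor
        · rintro ⟨z, hz, hzc⟩
          rcases hz with hz | hz
          · rw [if_neg hr₀] at hz
            obtain ⟨a, b, heq, hab⟩ := hz
            injection heq with heq1 heq2
            obtain rfl : d = a := Sum.inl_injective heq1
            rw [heq2] at hzc
            exact ⟨b, hab, (ihc b).1 hzc⟩
          · have hz2 : (Sum.inl d, z) = (Sum.inr (), Sum.inr ()) := hz
            injection hz2 with h1 _
            exact absurd h1 (by simp)
        · rintro ⟨e, he, hec⟩
          exact ⟨Sum.inl e, Or.inl (by rw [if_neg hr₀]; exact ⟨d, e, rfl, he⟩),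
            (ihc e).2 hec⟩
      | inv r₀ =>
        have hr₀ : r₀ ≠ rr := hbase
        constructor
        · rintro ⟨z, hz, hzc⟩
          have hz' : (z, Sum.inl d) ∈ rI' r₀ := hz
          rcases hz' with hz' | hz'
          · rw [if_neg hr₀] at hz'
            obtain ⟨a, b, heq, hab⟩ := hz'
            injection heq with heq1 heq2
            obtain rfl : d = b := Sum.inl_injective heq2
            rw [heq1] at hzc
            exact ⟨a, hab, (ihc a).1 hzc⟩
          · have hz2 : (z, Sum.inl d) = (Sum.inr (), Sum.inr ()) := hz'
            injection hz2 with _ h2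
            exact absurd h2 (by simp)
        · rintro ⟨e, he, hec⟩
          refine ⟨Sum.inl e, ?_, (ihc e).2 hec⟩
          show (Sum.inl e, Sum.inl d) ∈ rI' r₀
          exact Or.inl (by rw [if_neg hr₀]; exact ⟨e, d, rfl, he⟩)
  have hsem : GTBox.sem T (D ⊕ Unit) M'.concI M'.roleI := by
    intro p hp
    rw [hT] at hp
    rcases List.mem_cons.1 hp with h1 | hp
    · subst h1
      rintro z ⟨e, hz, he⟩
      have he' : e ∈ cI' AA := he
      have : e = Sum.inr () := by
        rcases he' with he' | he'
        · rw [if_pos rfl] at he'; exact absurd he' (Set.notMem_empty e)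
        · exact he'
      subst this
      have hz' : (z, Sum.inr ()) ∈ rI' rr := hz
      rcases hz' with hz' | hz'
      · rw [if_pos rfl] at hz'
        obtain ⟨i, _, heq⟩ := hz'
        injection heq with _ h2
        exact absurd h2 (by simp)
      · have hz2 : (z, Sum.inr ()) = (Sum.inr (), Sum.inr ()) := hz'
        injection hz2 with h1 _
        show z ∈ cI' AA
        rw [h1]
        exact Or.inr rfl
    rcases List.mem_cons.1 hp with h2 | hp
    · subst h2
      rintro z ⟨hz1, _⟩
      have hz1' : z ∈ cI' AA := hz1
      have : z = Sum.inr () := by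
        rcases hz1' with h | h
        · rw [if_pos rfl] at h; exact absurd h (Set.notMem_empty z)
        · exact h
      subst this
      exact hfull Cq
    · intro z hz
      have hA1 : AA ∉ p.1.cnames := fun h => hAA₂ (gtbox_mem_cnames hp AA (Or.inl h))
      have hA2 : AA ∉ p.2.cnames := fun h => hAA₂ (gtbox_mem_cnames hp AA (Or.inr h))
      have hR1 : rr ∉ p.1.rnames := fun h => hrr₂ (gtbox_mem_rnames hp rr (Or.inl h))
      have hR2 : rr ∉ p.2.rnames := fun h => hrr₂ (gtbox_mem_rnames hp rr (Or.inr h))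
      cases z with
      | inl d => exact (hinl p.2 hA2 hR2 d).2 (hTc p hp ((hinl p.1 hA1 hR1 d).1 hz))
      | inr u => cases u; exact hfull p.2
  have hmod : M'.ModelOf B := by
    constructor
    · rintro ⟨c, a⟩ hp
      rw [hBc] at hp
      rcases hp with hp | hp
      · have hne : c ≠ AA := fun h => hAA₁ (h ▸ hWsig.1 (c, a) hp)
        have hin : a ∈ W.Ind := Or.inl ⟨c, hp⟩
        show M'.ind a ∈ cI' c
        rw [show M'.ind a = Sum.inl (M₀.ind a) from if_neg (hfreshy a hin)]
        exact Or.inl (by rw [if_neg hne]; exact ⟨M₀.ind a, hMW.1 (c, a) hp, rfl⟩)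
      · rw [Set.mem_singleton_iff] at hp
        injection hp with h1 h2
        show M'.ind a ∈ cI' c
        rw [h1, h2]
        rw [show M'.ind (path (2*N+1)) = Sum.inr () from if_pos ⟨2*N+1, by omega, rfl⟩]
        exact Or.inr rfl
    · rintro ⟨ρ, x, y⟩ hp
      rw [hBr] at hp
      rcases hp with (hp | hp) | hp
      · have hne : ρ ≠ rr := fun h => hrr₁ (h ▸ hWsig.2 (ρ, x, y) hp)
        have hin1 : x ∈ W.Ind := Or.inr ⟨ρ, y, Or.inl hp⟩
        have hin2 : y ∈ W.Ind := Or.inr ⟨ρ, x, Or.inr hp⟩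
        show (M'.ind x, M'.ind y) ∈ rI' ρ
        rw [show M'.ind x = Sum.inl (M₀.ind x) from if_neg (hfreshy _ hin1),
          show M'.ind y = Sum.inl (M₀.ind y) from if_neg (hfreshy _ hin2)]
        refine Or.inl ?_
        rw [if_neg hne]
        exact ⟨M₀.ind x, M₀.ind y, rfl, hMW.2 (ρ, x, y) hp⟩
      · obtain ⟨i, hi, heq⟩ := hp
        injection heq with h1 h2
        injection h2 with h2a h2b
        have m1 : path i ∉ yset := by
          rintro ⟨j, hj, hje⟩
          have := hpathinj hje; omega
        have m2 : path (i+1) ∉ yset := by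
          rintro ⟨j, hj, hje⟩
          have := hpathinj hje; omega
        show (M'.ind x, M'.ind y) ∈ rI' ρ
        rw [h1, h2a, h2b]
        rw [show M'.ind (path i) = Sum.inl (M₀.ind (path i)) from if_neg m1,
          show M'.ind (path (i+1)) = Sum.inl (M₀.ind (path (i+1))) from if_neg m2]
        exact Or.inl (by rw [if_pos rfl]; exact ⟨i, hi, rfl⟩)
      · obtain ⟨i, hi, heq⟩ := hp
        injection heq with h1 h2
        injection h2 with h2a h2b
        have m1 : path (N+1+i) ∈ yset := ⟨N+1+i, by omega, rfl⟩
        have m2 : path (N+2+i) ∈ yset := ⟨N+2+i, by omega, rfl⟩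
        show (M'.ind x, M'.ind y) ∈ rI' ρ
        rw [h1, h2a, h2b]
        rw [show M'.ind (path (N+1+i)) = Sum.inr () from if_pos m1,
          show M'.ind (path (N+2+i)) = Sum.inr () from if_pos m2]
        exact Or.inr rfl
  obtain ⟨f, hf, hfa⟩ := hca (D ⊕ Unit) M' hsem hmod
  have hinda₀ : M'.ind a₀ = Sum.inl (M₀.ind a₀) := if_neg ha₀y
  -- every variable of q is mapped into the left part
  have hleft : ∀ x ∈ q.vars, ∃ d : D, f x = Sum.inl d := by
    intro x hx
    have hpathrel := hconn (q.ans 0) (Or.inr ⟨0, rfl⟩) x hx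
    clear hx
    induction hpathrel with
    | refl =>
      refine ⟨M₀.ind a₀, ?_⟩
      have := hfa 0
      rwa [hinda₀] at this
    | @tail b c hstep hadj ih =>
      obtain ⟨d, hd⟩ := ih
      obtain ⟨ρ, hor⟩ := hadj
      have hρ : ρ ≠ rr := by
        rcases hor with h | h
        · exact fun he => hrr₃ _ _ (he ▸ h)
        · exact fun he => hrr₃ _ _ (he ▸ h)
      rcases hor with h | h
      · rcases hf.2 _ h with hmem | hmem
        · rw [if_neg hρ] at hmem
          obtain ⟨a, b', heq, _⟩ := hmem
          injection heq with _ h2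
          exact ⟨b', h2⟩
        · have hm2 : (f b, f c) = (Sum.inr (), Sum.inr ()) := hmem
          injection hm2 with h1 _
          rw [h1] at hd
          exact absurd hd (by simp)
      · rcases hf.2 _ h with hmem | hmem
        · rw [if_neg hρ] at hmem
          obtain ⟨a, b', heq, _⟩ := hmem
          injection heq with h1 _
          exact ⟨a, h1⟩
        · have hm2 : (f c, f b) = (Sum.inr (), Sum.inr ()) := hmem
          injection hm2 with _ h2
          rw [h2] at hd
          exact absurd hd (by simp)
  set g : V → D := fun x => Sum.elim id (fun _ => M₀.ind a₀) (f x) with hg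
  have hmatch : q.Match M₀.concI M₀.roleI g := by
    constructor
    · rintro ⟨c, x⟩ hp
      have hx : x ∈ q.vars := Or.inl (Or.inl ⟨c, hp⟩)
      obtain ⟨d, hd⟩ := hleft x hx
      have hgd : g x = d := by rw [hg]; simp only [hd, Sum.elim_inl, id_eq]
      have hne : c ≠ AA := fun h => hAA₃ x (h ▸ hp)
      rcases hf.1 (c, x) hp with hmem | hmem
      · rw [if_neg hne] at hmem
        obtain ⟨e, he, hed⟩ := hmem
        have hde : e = d := Sum.inl_injective (by rw [hed, hd])
        show g x ∈ M₀.concI c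
        rw [hgd, ← hde]
        exact he
      · rw [Set.mem_singleton_iff] at hmem
        rw [hmem] at hd
        exact absurd hd (by simp)
    · rintro ⟨ρ, x, y⟩ hp
      have hxv : x ∈ q.vars := Or.inl (Or.inr ⟨ρ, y, Or.inl hp⟩)
      have hyv : y ∈ q.vars := Or.inl (Or.inr ⟨ρ, x, Or.inr hp⟩)
      obtain ⟨dx, hdx⟩ := hleft x hxv
      obtain ⟨dy, hdy⟩ := hleft y hyv
      have hgdx : g x = dx := by rw [hg]; simp only [hdx, Sum.elim_inl, id_eq]
      have hgdy : g y = dy := by rw [hg]; simp only [hdy, Sum.elim_inl, id_eq]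
      have hρ : ρ ≠ rr := fun h => hrr₃ x y (h ▸ hp)
      rcases hf.2 (ρ, x, y) hp with hmem | hmem
      · rw [if_neg hρ] at hmem
        obtain ⟨a, b, heq, hab⟩ := hmem
        injection heq with h1 h2
        have h1' : f x = Sum.inl a := h1
        have h2' : f y = Sum.inl b := h2
        have ha : dx = a := Sum.inl_injective (by rw [← hdx, h1'])
        have hb : dy = b := Sum.inl_injective (by rw [← hdy, h2'])
        show (g x, g y) ∈ M₀.roleI ρ
        rw [hgdx, hgdy, ha, hb]
        exact hab
      · have hm2 : (f x, f y) = (Sum.inr (), Sum.inr ()) := hmem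
        injection hm2 with h1 _
        rw [h1] at hdx
        exact absurd hdx (by simp)
  have hans : ∀ i, g (q.ans i) = M₀.ind a₀ := by
    intro i
    have h := hfa i
    rw [hinda₀] at h
    rw [hg]
    simp only [h, Sum.elim_inl, id_eq]
  obtain ⟨i, hi⟩ := hno g hmatch
  exact hi (hans i)

end DetachedLemma
section EF

variable {I : Type}

def EFswap (N : ℕ) (chain : Bool → ℕ → I) (m : ℕ) (d e : I) : Prop :=
  ∃ s i, 2^m < i ∧ i ≤ N ∧ d = chain (!s) i ∧ e = chain s i

def EFlow (N : ℕ) (chain : Bool → ℕ → I) (m : ℕ) (e : I) : Prop :=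
  ∀ s i, i ≤ N → e = chain s i → i + 2^m < N

def EFgap (N : ℕ) (chain : Bool → ℕ → I) (m : ℕ) (d e d' e' : I) : Prop :=
  ∀ i i', d = e → (∃ s, i ≤ N ∧ e = chain s i) → d' ≠ e' →
    (∃ s, i' ≤ N ∧ e' = chain s i') → (i + 2^m < i' ∨ i' + 2^m < i)

def EFsim (N : ℕ) (chain : Bool → ℕ → I) (m : ℕ) (v₁ v₂ : ℕ → I) : Prop :=
  (∀ k, (v₁ k = v₂ k ∧ EFlow N chain m (v₂ k)) ∨ EFswap N chain m (v₁ k) (v₂ k)) ∧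
  (∀ k l, EFgap N chain m (v₁ k) (v₂ k) (v₁ l) (v₂ l))

lemma pow_succ_split (m : ℕ) : 2^(m+1) = 2^m + 2^m := by
  rw [pow_succ]; omega

lemma EFsim_mono {N : ℕ} {chain : Bool → ℕ → I} {m : ℕ} {v₁ v₂ : ℕ → I}
    (h : EFsim N chain (m+1) v₁ v₂) : EFsim N chain m v₁ v₂ := by
  have hle : 2^m ≤ 2^(m+1) := Nat.pow_le_pow_right (by norm_num) (by omega)
  constructor
  · intro k
    rcases h.1 k with ⟨he, hlow⟩ | ⟨s, i, h1, h2, h3, h4⟩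
    · exact Or.inl ⟨he, fun s i hi hei => by have := hlow s i hi hei; omega⟩
    · exact Or.inr ⟨s, i, by omega, h2, h3, h4⟩
  · intro k l i i' hp hpc hq hqc
    have := h.2 k l i i' hp hpc hq hqc
    omega

lemma EFsim_symm {N : ℕ} {chain : Bool → ℕ → I}
    (hinj : ∀ s i s' i', i ≤ N → i' ≤ N → chain s i = chain s' i' → s = s' ∧ i = i')
    {m : ℕ} {v₁ v₂ : ℕ → I}
    (h : EFsim N chain m v₁ v₂) : EFsim N chain m v₂ v₁ := by
  constructor
  · intro k
    rcases h.1 k with ⟨he, hlow⟩ | ⟨s, i, h1, h2, h3, h4⟩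
    · exact Or.inl ⟨he.symm, by rw [he]; exact hlow⟩
    · exact Or.inr ⟨!s, i, h1, h2, by rw [Bool.not_not]; exact h4, h3⟩
  · intro k l i i' hp hpc hq hqc
    have hp' : v₁ k = v₂ k := hp.symm
    have hpc' : ∃ s, i ≤ N ∧ v₂ k = chain s i := by
      obtain ⟨s, hiN, hc⟩ := hpc
      exact ⟨s, hiN, by rw [← hp']; exact hc⟩
    have hq' : v₁ l ≠ v₂ l := fun hh => hq hh.symm
    have hqc' : ∃ s, i' ≤ N ∧ v₂ l = chain s i' := by
      obtain ⟨s, hiN, hc⟩ := hqc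
      rcases h.1 l with ⟨he, _⟩ | ⟨s₀, i₀, _, hN₀, hd₀, he₀⟩
      · exact absurd he hq'
      · have := hinj (!s₀) i₀ s i' hN₀ hiN (hd₀ ▸ hc)
        exact ⟨s₀, hiN, by rw [he₀, this.2]⟩
    exact h.2 k l i i' hp' hpc' hq' hqc'

lemma EFresp {N : ℕ} {chain : Bool → ℕ → I}
    (hinj : ∀ s i s' i', i ≤ N → i' ≤ N → chain s i = chain s' i' → s = s' ∧ i = i')
    (m : ℕ) (hN : 2^(m+1) < N) {v₁ v₂ : ℕ → I}
    (h : EFsim N chain (m+1) v₁ v₂) (x : ℕ) (e : I) :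
    ∃ d, EFsim N chain m (Function.update v₁ x d) (Function.update v₂ x e) := by
  classical
  have hps := pow_succ_split m
  have E1 : ∀ (f : ℕ → I) (d : I), Function.update f x d x = d :=
    fun f d => Function.update_self x d f
  have E2 : ∀ (f : ℕ → I) (d : I) (k : ℕ), k ≠ x → Function.update f x d k = f k :=
    fun f d k hk => Function.update_of_ne hk d f
  by_cases hc : ∃ s i, i ≤ N ∧ e = chain s i
  case neg =>
    refine ⟨e, ?_, ?_⟩
    · intro k
      by_cases hk : k = x
      · rw [hk, E1, E1]
        exact Or.inl ⟨rfl, fun s i hi he => absurd ⟨s, i, hi, he⟩ hc⟩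
      · rw [E2 _ _ _ hk, E2 _ _ _ hk]
        exact (EFsim_mono h).1 k
    · intro k l
      by_cases hk : k = x
      · rw [hk, E1, E1]
        intro i i' hp hpc hq hqc
        obtain ⟨s, hi, hce⟩ := hpc
        exact absurd ⟨s, i, hi, hce⟩ hc
      · by_cases hl : l = x
        · rw [hl, E1, E1, E2 _ _ _ hk, E2 _ _ _ hk]
          intro i i' hp hpc hq hqc
          exact absurd rfl hq
        · rw [E2 _ _ _ hk, E2 _ _ _ hk, E2 _ _ _ hl, E2 _ _ _ hl]
          exact (EFsim_mono h).2 k l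
  case pos =>
    obtain ⟨s, i, hiN, he⟩ := hc
    by_cases htrig : N ≤ i + 2^m ∨
        (∃ l, v₁ l ≠ v₂ l ∧ ∃ s' i', i' ≤ N ∧ v₂ l = chain s' i' ∧ i' ≤ i + 2^m ∧ i ≤ i' + 2^m)
    · -- respond with the swapped element
      have hgt : 2^m < i := by
        rcases htrig with htop | ⟨l, hne, s', i', hi'N, hel, hb1, hb2⟩
        · omega
        · rcases h.1 l with ⟨heq, _⟩ | ⟨s₀, i₀, h2m, hN₀, hdl, hel₀⟩
          · exact absurd heq hne
          · have := hinj s₀ i₀ s' i' hN₀ hi'N (hel₀ ▸ hel)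
            omega
      refine ⟨chain (!s) i, ?_, ?_⟩
      · intro k
        by_cases hk : k = x
        · rw [hk, E1, E1]
          exact Or.inr ⟨s, i, hgt, hiN, rfl, he⟩
        · rw [E2 _ _ _ hk, E2 _ _ _ hk]
          exact (EFsim_mono h).1 k
      · intro k l
        by_cases hk : k = x
        · rw [hk, E1, E1]
          intro i₁ i₂ hp hpc hq hqc
          rw [he] at hp
          exact absurd (hinj (!s) i s i hiN hiN hp).1 (Bool.not_ne_self s)
        · by_cases hl : l = x
          · rw [hl, E1, E1, E2 _ _ _ hk, E2 _ _ _ hk]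
            intro j j' hp hpc hq hqc
            obtain ⟨t, hjN, hck⟩ := hpc
            have hidk : v₁ k = v₂ k ∧ EFlow N chain (m+1) (v₂ k) := by
              rcases h.1 k with hid | ⟨s₀, i₀, _, hN₀, hd₀, he₀⟩
              · exact hid
              · exfalso
                have h' : chain (!s₀) i₀ = chain s₀ i₀ := by rw [← hd₀, ← he₀, hp]
                exact (Bool.not_ne_self s₀) (hinj _ _ _ _ hN₀ hN₀ h').1
            have hlowk : j + 2^(m+1) < N := hidk.2 t j hjN hck
            obtain ⟨t', hj'N, hce⟩ := hqc
            have hji : j' = i := (hinj t' j' s i hj'N hiN (hce.symm.trans he)).2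
            rcases htrig with htop | ⟨l₀, hne₀, s', i'', hi''N, hel₀, hb1, hb2⟩
            · omega
            · have hgap := h.2 k l₀ j i'' hp ⟨t, hjN, hck⟩ hne₀ ⟨s', hi''N, hel₀⟩
              omega
          · rw [E2 _ _ _ hk, E2 _ _ _ hk, E2 _ _ _ hl, E2 _ _ _ hl]
            exact (EFsim_mono h).2 k l
    · -- respond with the identical element
      push_neg at htrig
      obtain ⟨htop, hnear⟩ := htrig
      refine ⟨e, ?_, ?_⟩
      · intro k
        by_cases hk : k = x
        · rw [hk, E1, E1]
          refine Or.inl ⟨rfl, fun s'' i'' hi'' he'' => ?_⟩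
          have : i'' = i := (hinj s'' i'' s i hi'' hiN (he''.symm.trans he)).2
          omega
        · rw [E2 _ _ _ hk, E2 _ _ _ hk]
          exact (EFsim_mono h).1 k
      · intro k l
        by_cases hk : k = x
        · by_cases hl : l = x
          · rw [hk, hl, E1, E1]
            intro j j' hp hpc hq hqc
            exact absurd rfl hq
          · rw [hk, E1, E1, E2 _ _ _ hl, E2 _ _ _ hl]
            intro j j' hp hpc hq hqc
            obtain ⟨t, hjN, hce⟩ := hpc
            have hji : j = i := (hinj t j s i hjN hiN (hce.symm.trans he)).2
            obtain ⟨s'', hi'N, hcl⟩ := hqc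
            by_cases hj2 : j' ≤ i + 2^m
            · have := hnear l hq s'' j' hi'N hcl hj2
              omega
            · omega
        · by_cases hl : l = x
          · rw [hl, E1, E1, E2 _ _ _ hk, E2 _ _ _ hk]
            intro j j' hp hpc hq hqc
            exact absurd rfl hq
          · rw [E2 _ _ _ hk, E2 _ _ _ hk, E2 _ _ _ hl, E2 _ _ _ hl]
            exact (EFsim_mono h).2 k l

end EF
section EFMain

variable {I C R : Type}

lemma fo_sat_congr {X : Type} [DecidableEq X] {D : Type}
    (cI : C → Set D) (rI : R → Set (D × D)) :
    ∀ (φ : FO X C R) (v w : X → D), (∀ x ∈ φ.free, v x = w x) →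
      (FO.Sat cI rI φ v ↔ FO.Sat cI rI φ w) := by
  intro φ
  induction φ with
  | eq x y =>
    intro v w h
    show v x = v y ↔ w x = w y
    rw [h x (by simp [FO.free]), h y (by simp [FO.free])]
  | cn c x =>
    intro v w h
    show v x ∈ _ ↔ w x ∈ _
    rw [h x (by simp [FO.free])]
  | rl r x y =>
    intro v w h
    show (v x, v y) ∈ _ ↔ (w x, w y) ∈ _
    rw [h x (by simp [FO.free]), h y (by simp [FO.free])]
  | fal => intro _ _ _; exact Iff.rfl
  | imp φ ψ ih1 ih2 =>
    intro v w h
    have h1 := ih1 v w (fun x hx => h x (by simp [FO.free]; exact Or.inl hx))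
    have h2 := ih2 v w (fun x hx => h x (by simp [FO.free]; exact Or.inr hx))
    show (_ → _) ↔ (_ → _)
    rw [h1, h2]
  | all x ψ ih =>
    intro v w h
    show (∀ d, _) ↔ (∀ d, _)
    refine forall_congr' (fun d => ih _ _ ?_)
    intro y hy
    by_cases hxy : y = x
    · subst hxy; rw [Function.update_self, Function.update_self]
    · rw [Function.update_of_ne hxy, Function.update_of_ne hxy]
      exact h y (Finset.mem_erase.2 ⟨hxy, hy⟩)

lemma EF_main
    (AA : C) (rr : R) (N : ℕ) (chain : Bool → ℕ → I)
    (hinj : ∀ s i s' i', i ≤ N → i' ≤ N → chain s i = chain s' i' → s = s' ∧ i = i')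
    (cI₁ cI₂ : C → Set I) (rI : R → Set (I × I))
    (hcEq : ∀ c, c ≠ AA → cI₁ c = cI₂ c)
    (hAA1 : cI₁ AA = {chain false N}) (hAA2 : cI₂ AA = {chain true N})
    (hfresh : ∀ c, c ≠ AA → ∀ s i, 1 ≤ i → i ≤ N → chain s i ∉ cI₁ c)
    (hrrE : rI rr = {p | ∃ s i, i < N ∧ p = (chain s i, chain s (i+1))})
    (hiso : ∀ ρ, ρ ≠ rr → ∀ s i, 1 ≤ i → i ≤ N →
      (∀ z, (chain s i, z) ∉ rI ρ) ∧ (∀ z, (z, chain s i) ∉ rI ρ)) :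
    ∀ (φ : FO ℕ C R) (m : ℕ), FO.qr φ ≤ m → 2^m < N →
      ∀ v₁ v₂, EFsim N chain m v₁ v₂ → (FO.Sat cI₁ rI φ v₁ ↔ FO.Sat cI₂ rI φ v₂) := by
  have hpow : ∀ m : ℕ, 1 ≤ 2^m := fun m => Nat.one_le_two_pow
  have hEmem : ∀ (t : Bool) (j : ℕ) (t' : Bool) (j' : ℕ), j ≤ N → j' ≤ N →
      ((chain t j, chain t' j') ∈ rI rr ↔ (t' = t ∧ j < N ∧ j' = j + 1)) := by
    intro t j t' j' hj hj'
    rw [hrrE]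
    constructor
    · rintro ⟨s, i, hiN, heq⟩
      injection heq with h1 h2
      obtain ⟨hts, hji⟩ := hinj t j s i hj (by omega) h1
      obtain ⟨hts', hji'⟩ := hinj t' j' s (i+1) hj' (by omega) h2
      exact ⟨by rw [hts, hts'], by omega, by omega⟩
    · rintro ⟨h1, h2, h3⟩
      exact ⟨t, j, h2, by rw [h1, h3]⟩
  intro φ
  induction φ with
  | eq x y =>
    intro m _ _ v₁ v₂ hsim
    show v₁ x = v₁ y ↔ v₂ x = v₂ y
    rcases hsim.1 x with ⟨hex, hlx⟩ | ⟨sx, ix, hgx, hNx, hdx, hex⟩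
    · rcases hsim.1 y with ⟨hey, hly⟩ | ⟨sy, iy, hgy, hNy, hdy, hey⟩
      · rw [hex, hey]
      · -- x id, y swap
        have hney : v₁ y ≠ v₂ y := by
          rw [hdy, hey]
          intro hcc
          exact (Bool.not_ne_self sy) (hinj _ _ _ _ hNy hNy hcc).1
        have h2p := hpow m
        constructor
        · intro hh
          exfalso
          have hxc : v₂ x = chain (!sy) iy := by rw [← hex, hh]; exact hdy
          have := hsim.2 x y iy iy hex ⟨!sy, hNy, hxc⟩ hney ⟨sy, hNy, hey⟩
          omega
        · intro hh
          exfalso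
          have hxc : v₂ x = chain sy iy := by rw [hh]; exact hey
          have := hsim.2 x y iy iy hex ⟨sy, hNy, hxc⟩ hney ⟨sy, hNy, hey⟩
          omega
    · rcases hsim.1 y with ⟨hey, hly⟩ | ⟨sy, iy, hgy, hNy, hdy, hey⟩
      · -- x swap, y id
        have hnex : v₁ x ≠ v₂ x := by
          rw [hdx, hex]
          intro hcc
          exact (Bool.not_ne_self sx) (hinj _ _ _ _ hNx hNx hcc).1
        have h2p := hpow m
        constructor
        · intro hh
          exfalso
          have hyc : v₂ y = chain (!sx) ix := by rw [← hey, ← hh]; exact hdx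
          have := hsim.2 y x ix ix hey ⟨!sx, hNx, hyc⟩ hnex ⟨sx, hNx, hex⟩
          omega
        · intro hh
          exfalso
          have hyc : v₂ y = chain sx ix := by rw [← hh]; exact hex
          have := hsim.2 y x ix ix hey ⟨sx, hNx, hyc⟩ hnex ⟨sx, hNx, hex⟩
          omega
      · -- both swap
        rw [hdx, hdy, hex, hey]
        constructor
        · intro hh
          obtain ⟨h1, h2⟩ := hinj _ _ _ _ hNx hNy hh
          rw [Bool.not_inj h1, h2]
        · intro hh
          obtain ⟨h1, h2⟩ := hinj _ _ _ _ hNx hNy hh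
          rw [h1, h2]
  | cn c x =>
    intro m _ _ v₁ v₂ hsim
    show v₁ x ∈ cI₁ c ↔ v₂ x ∈ cI₂ c
    by_cases hcA : c = AA
    · subst hcA
      rw [hAA1, hAA2]
      rcases hsim.1 x with ⟨hex, hlx⟩ | ⟨sx, ix, hgx, hNx, hdx, hex⟩
      · simp only [Set.mem_singleton_iff]
        have h2p := hpow m
        constructor
        · intro hh
          exfalso
          have := hlx false N le_rfl (by rw [← hex, hh])
          omega
        · intro hh
          exfalso
          have := hlx true N le_rfl hh
          omega
      · simp only [Set.mem_singleton_iff]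
        rw [hdx, hex]
        constructor
        · intro hh
          obtain ⟨h1, h2⟩ := hinj _ _ _ _ hNx le_rfl hh
          have hsx : sx = true := by
            cases sx
            · exact absurd h1.symm (by simp)
            · rfl
          rw [hsx, h2]
        · intro hh
          obtain ⟨h1, h2⟩ := hinj _ _ _ _ hNx le_rfl hh
          rw [h2, h1, Bool.not_true]
    · rw [← hcEq c hcA]
      rcases hsim.1 x with ⟨hex, _⟩ | ⟨sx, ix, hgx, hNx, hdx, hex⟩
      · rw [hex]
      · have h1 : 1 ≤ ix := by have := hpow m; omega
        rw [hdx, hex]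
        constructor
        · intro hh; exact absurd hh (hfresh c hcA _ _ h1 hNx)
        · intro hh; exact absurd hh (hfresh c hcA _ _ h1 hNx)
  | rl ρ x y =>
    intro m _ _ v₁ v₂ hsim
    show (v₁ x, v₁ y) ∈ rI ρ ↔ (v₂ x, v₂ y) ∈ rI ρ
    by_cases hρ : ρ = rr
    · subst hρ
      rcases hsim.1 x with ⟨hex, hlx⟩ | ⟨sx, ix, hgx, hNx, hdx, hex⟩
      · rcases hsim.1 y with ⟨hey, hly⟩ | ⟨sy, iy, hgy, hNy, hdy, hey⟩
        · rw [hex, hey]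
        · -- x id, y swap : both sides false
          have h1y : 1 ≤ iy := by have := hpow m; omega
          constructor
          · intro hh
            exfalso
            rw [hdy] at hh
            -- (v₁ x, chain (!sy) iy) ∈ rI rr, so v₁ x = chain (!sy) (iy - 1)
            rw [hrrE] at hh
            obtain ⟨s, i, hiN, heq⟩ := hh
            injection heq with ha hb
            obtain ⟨hs1, hs2⟩ := hinj _ _ _ _ hNy (by omega) hb
            have hvx : v₂ x = chain s i := by rw [← hex]; exact ha
            have h2p := hpow m
            have := hsim.2 x y i iy hex ⟨s, by omega, hvx⟩
              (by rw [hdy, hey]; intro hcc; exact (Bool.not_ne_self sy) (hinj _ _ _ _ hNy hNy hcc).1)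
              ⟨sy, hNy, hey⟩
            omega
          · intro hh
            exfalso
            rw [hey] at hh
            rw [hrrE] at hh
            obtain ⟨s, i, hiN, heq⟩ := hh
            injection heq with ha hb
            obtain ⟨hs1, hs2⟩ := hinj _ _ _ _ hNy (by omega) hb
            have hvx : v₂ x = chain s i := ha
            have h2p := hpow m
            have := hsim.2 x y i iy hex ⟨s, by omega, hvx⟩
              (by rw [hdy, hey]; intro hcc; exact (Bool.not_ne_self sy) (hinj _ _ _ _ hNy hNy hcc).1)
              ⟨sy, hNy, hey⟩
            omega
      · rcases hsim.1 y with ⟨hey, hly⟩ | ⟨sy, iy, hgy, hNy, hdy, hey⟩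
        · -- x swap, y id : both sides false
          constructor
          · intro hh
            exfalso
            rw [hdx] at hh
            rw [hrrE] at hh
            obtain ⟨s, i, hiN, heq⟩ := hh
            injection heq with ha hb
            obtain ⟨hs1, hs2⟩ := hinj _ _ _ _ hNx (by omega) ha
            have hvy : v₂ y = chain s (i+1) := by rw [← hey]; exact hb
            have h2p := hpow m
            have := hsim.2 y x (i+1) ix hey ⟨s, by omega, hvy⟩
              (by rw [hdx, hex]; intro hcc; exact (Bool.not_ne_self sx) (hinj _ _ _ _ hNx hNx hcc).1)
              ⟨sx, hNx, hex⟩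
            omega
          · intro hh
            exfalso
            rw [hex] at hh
            rw [hrrE] at hh
            obtain ⟨s, i, hiN, heq⟩ := hh
            injection heq with ha hb
            obtain ⟨hs1, hs2⟩ := hinj _ _ _ _ hNx (by omega) ha
            have hvy : v₂ y = chain s (i+1) := hb
            have h2p := hpow m
            have := hsim.2 y x (i+1) ix hey ⟨s, by omega, hvy⟩
              (by rw [hdx, hex]; intro hcc; exact (Bool.not_ne_self sx) (hinj _ _ _ _ hNx hNx hcc).1)
              ⟨sx, hNx, hex⟩
            omega
        · -- both swap
          rw [hdx, hdy, hex, hey]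
          rw [hEmem _ _ _ _ hNx hNy, hEmem _ _ _ _ hNx hNy]
          constructor
          · rintro ⟨h1, h2, h3⟩
            exact ⟨Bool.not_inj h1, h2, h3⟩
          · rintro ⟨h1, h2, h3⟩
            exact ⟨by rw [h1], h2, h3⟩
    · -- ρ ≠ rr
      rcases hsim.1 x with ⟨hex, hlx⟩ | ⟨sx, ix, hgx, hNx, hdx, hex⟩
      · rcases hsim.1 y with ⟨hey, hly⟩ | ⟨sy, iy, hgy, hNy, hdy, hey⟩
        · rw [hex, hey]
        · have h1y : 1 ≤ iy := by have := hpow m; omega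
          constructor
          · intro hh
            rw [hdy] at hh
            exact absurd hh ((hiso ρ hρ (!sy) iy h1y hNy).2 _)
          · intro hh
            rw [hey] at hh
            exact absurd hh ((hiso ρ hρ sy iy h1y hNy).2 _)
      · have h1x : 1 ≤ ix := by have := hpow m; omega
        constructor
        · intro hh
          rw [hdx] at hh
          exact absurd hh ((hiso ρ hρ (!sx) ix h1x hNx).1 _)
        · intro hh
          rw [hex] at hh
          exact absurd hh ((hiso ρ hρ sx ix h1x hNx).1 _)
  | fal => intro m _ _ v₁ v₂ _; exact Iff.rfl
  | imp φ ψ ih1 ih2 =>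
    intro m hm hN v₁ v₂ hsim
    have hq1 : FO.qr φ ≤ m := le_trans (le_max_left _ _) hm
    have hq2 : FO.qr ψ ≤ m := le_trans (le_max_right _ _) hm
    have h1 := ih1 m hq1 hN v₁ v₂ hsim
    have h2 := ih2 m hq2 hN v₁ v₂ hsim
    show (_ → _) ↔ (_ → _)
    rw [h1, h2]
  | all x ψ ih =>
    intro m hm hN v₁ v₂ hsim
    obtain ⟨m', rfl⟩ : ∃ m', m = m' + 1 := by
      have : FO.qr ψ + 1 ≤ m := hm
      exact ⟨m - 1, by omega⟩
    have hq : FO.qr ψ ≤ m' := by have : FO.qr ψ + 1 ≤ m' + 1 := hm; omega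
    have hN' : 2^m' < N := by
      have : 2^m' ≤ 2^(m'+1) := Nat.pow_le_pow_right (by norm_num) (by omega)
      omega
    constructor
    · intro hall e
      obtain ⟨d, hd⟩ := EFresp hinj m' hN hsim x e
      exact (ih m' hq hN' _ _ hd).1 (hall d)
    · intro hall d
      have hsim' := EFsim_symm hinj hsim
      obtain ⟨e, he⟩ := EFresp hinj m' hN hsim' x d
      exact (ih m' hq hN' _ _ (EFsim_symm hinj he)).2 (hall e)

end EFMain
section ChainAux

attribute [local instance] Classical.propDecidable

variable {I : Type}

noncomputable def chainHeight (N : ℕ) (chain : Bool → ℕ → I) (e : I) : ℕ :=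
  if h : ∃ p : Bool × ℕ, p.2 ≤ N ∧ e = chain p.1 p.2 then h.choose.2 else 0

noncomputable def chainFlip (N : ℕ) (chain : Bool → ℕ → I) (e : I) : I :=
  if h : ∃ p : Bool × ℕ, p.2 ≤ N ∧ e = chain p.1 p.2 then chain (!h.choose.1) h.choose.2 else e

lemma chainHeight_eq {N : ℕ} {chain : Bool → ℕ → I}
    (hinj : ∀ s i s' i', i ≤ N → i' ≤ N → chain s i = chain s' i' → s = s' ∧ i = i')
    (s : Bool) (i : ℕ) (hi : i ≤ N) : chainHeight N chain (chain s i) = i := by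
  unfold chainHeight
  have hex : ∃ p : Bool × ℕ, p.2 ≤ N ∧ chain s i = chain p.1 p.2 := ⟨(s, i), hi, rfl⟩
  rw [dif_pos hex]
  obtain ⟨h1, h2⟩ := hex.choose_spec
  exact ((hinj s i _ _ hi h1 h2).2).symm

lemma chainHeight_zero {N : ℕ} {chain : Bool → ℕ → I} {e : I}
    (h : ¬ ∃ p : Bool × ℕ, p.2 ≤ N ∧ e = chain p.1 p.2) : chainHeight N chain e = 0 :=
  dif_neg h

lemma chainFlip_eq {N : ℕ} {chain : Bool → ℕ → I}
    (hinj : ∀ s i s' i', i ≤ N → i' ≤ N → chain s i = chain s' i' → s = s' ∧ i = i')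
    (s : Bool) (i : ℕ) (hi : i ≤ N) : chainFlip N chain (chain s i) = chain (!s) i := by
  unfold chainFlip
  have hex : ∃ p : Bool × ℕ, p.2 ≤ N ∧ chain s i = chain p.1 p.2 := ⟨(s, i), hi, rfl⟩
  rw [dif_pos hex]
  obtain ⟨h1, h2⟩ := hex.choose_spec
  obtain ⟨hs, hieq⟩ := hinj s i _ _ hi h1 h2
  rw [← hs, ← hieq]

end ChainAux
/-- the reduction scheme that turns a positive instance (witnessed by a
tree-shaped ABox `W` with root `a₀` such that `T_c, W ⊨ A*(a₀)` and `T_c, W ⊭ q(a₀)`)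
into non-FO-rewritability of `(T_c ∪ {∃r.A ⊑ A, A ⊓ A* ⊑ C_q}, Σ_c ∪ {A, r}, q)`,
witnessed by the family of ABoxes obtained by attaching an `r`-path ending in `A` to `a₀`. -/
theorem reduction_to_non_fo_rewritability {I C R V : Type} [Infinite I]
    (Tc : GTBox C R) (sc : Sig C R) (q : CQ V C R 1)
    (hconn : q.Connected)
    (Astar AA : C) (rr : R) (hne : AA ≠ Astar)
    (hAstar : Astar ∉ sc.concs)
    (hAA₁ : AA ∉ sc.concs) (hAA₂ : AA ∉ GTBox.cnames Tc) (hAA₃ : ∀ x, (AA, x) ∉ q.conc)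
    (hrr₁ : rr ∉ sc.roles) (hrr₂ : rr ∉ GTBox.rnames Tc) (hrr₃ : ∀ x y, (rr, x, y) ∉ q.role)
    (Cq : ELC C R)
    (hCq : ∀ (D : Type) (cI : C → Set D) (rI : R → Set (D × D)) (d : D),
      d ∈ ELC.ext cI rI Cq → ∃ f : V → D, q.Match cI rI f ∧ f (q.ans 0) = d)
    (T : GTBox C R)
    (hT : T = (ELC.ex (DLRole.name rr) (ELC.name AA), ELC.name AA) ::
              (ELC.inter (ELC.name AA) (ELC.name Astar), Cq) :: Tc)
    (s : Sig C R)
    (hs : s.concs = insert AA sc.concs ∧ s.roles = insert rr sc.roles)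
    (Wt : PseudoTree I C R) (a₀ : I) (hWcore : Wt.core = {a₀})
    (hWsig : Wt.toABox.InSig sc)
    (hWcons : ConsistentWith (GTBox.sem Tc) Wt.toABox)
    (hWpos : CertConc (GTBox.sem Tc) Wt.toABox Astar a₀)
    (hWneg : ¬ CertAns (GTBox.sem Tc) Wt.toABox q (fun _ => a₀))
    (path : ℕ → I) (hpath0 : path 0 = a₀) (hpathinj : Function.Injective path)
    (hpathfresh : ∀ i : ℕ, i ≠ 0 → path i ∉ Wt.toABox.Ind) :
    (¬ FORewritable I (GTBox.sem T) s q) ∧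
    ∀ k : ℕ, 1 ≤ k →
      CertAns (GTBox.sem T)
        (⟨Wt.conc ∪ {(AA, path k)},
          Wt.role ∪ {p | ∃ i < k, p = (rr, path i, path (i + 1))}⟩ : ABox I C R)
        q (fun _ => a₀) ∧
      ¬ CertAns (GTBox.sem T)
        (⟨Wt.conc,
          Wt.role ∪ {p | ∃ i, i + 1 < k ∧ p = (rr, path i, path (i + 1))}⟩ : ABox I C R)
        q (fun _ => a₀) := by
  obtain ⟨hsc, hsr⟩ := hs
  constructor
  · rintro ⟨φ, hφsig, hφ⟩
    classical
    set n := FO.qr φ with hn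
    set P := 2^n + 1 with hP
    set F := FO.free φ with hF
    set f := F.card with hf
    set N := (f + 2) * P with hNdef
    have h2n : 1 ≤ 2^n := Nat.one_le_two_pow
    have hNsplit : N = (f+1)*P + P := by rw [hNdef]; ring
    obtain ⟨FP, hFP⟩ : ∃ a, (f+1) * P = a := ⟨_, rfl⟩
    rw [hFP] at hNsplit
    have hPFP : P ≤ FP := by
      rw [← hFP]
      calc P = 1 * P := (one_mul P).symm
      _ ≤ (f+1) * P := mul_le_mul_left (by omega) P
    have h2nN : 2^n < N := by omega
    set chain : Bool → ℕ → I := fun s i => path (cond s (N+1+i) i) with hchain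
    have hinj : ∀ s i s' i', i ≤ N → i' ≤ N → chain s i = chain s' i' → s = s' ∧ i = i' := by
      intro s i s' i' hi hi' hcc
      have hcc' : cond s (N+1+i) i = cond s' (N+1+i') i' := hpathinj hcc
      cases s <;> cases s' <;> simp only [cond] at hcc'
      · exact ⟨rfl, hcc'⟩
      · exact absurd hcc' (by omega)
      · exact absurd hcc' (by omega)
      · exact ⟨rfl, by omega⟩
    have hchainF : ∀ i, chain false i = path i := fun _ => rfl
    have hchainT : ∀ i, chain true i = path (N+1+i) := fun _ => rfl
    have hchTN : chain true N = path (2*N+1) := by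
      rw [hchainT N, show N+1+N = 2*N+1 from by ring]
    set roleSet : Set (R × I × I) := Wt.role ∪ {p | ∃ i < N, p = (rr, path i, path (i+1))}
        ∪ {p | ∃ i < N, p = (rr, path (N+1+i), path (N+2+i))} with hroleSet
    set S1 : ABox I C R := ⟨Wt.conc ∪ {(AA, path N)}, roleSet⟩ with hS1
    set S2 : ABox I C R := ⟨Wt.conc ∪ {(AA, path (2*N+1))}, roleSet⟩ with hS2
    have hsigrole : ∀ p ∈ roleSet, p.1 ∈ s.roles := by
      rintro ⟨ρ, x, y⟩ ((hp | hp) | hp)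
      · rw [hsr]; exact Set.mem_insert_of_mem _ (hWsig.2 _ hp)
      · obtain ⟨i, _, heq⟩ := hp
        injection heq with h1 _
        rw [h1, hsr]
        exact Set.mem_insert _ _
      · obtain ⟨i, _, heq⟩ := hp
        injection heq with h1 _
        rw [h1, hsr]
        exact Set.mem_insert _ _
    have hsig1 : S1.InSig s := by
      constructor
      · rintro ⟨c, a⟩ (hp | hp)
        · rw [hsc]; exact Set.mem_insert_of_mem _ (hWsig.1 _ hp)
        · rw [Set.mem_singleton_iff] at hp
          injection hp with h1 _
          rw [h1, hsc]
          exact Set.mem_insert _ _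
      · exact hsigrole
    have hsig2 : S2.InSig s := by
      constructor
      · rintro ⟨c, a⟩ (hp | hp)
        · rw [hsc]; exact Set.mem_insert_of_mem _ (hWsig.1 _ hp)
        · rw [Set.mem_singleton_iff] at hp
          injection hp with h1 _
          rw [h1, hsc]
          exact Set.mem_insert _ _
      · exact hsigrole
    have hcert1 : CertAns (GTBox.sem T) S1 q (fun _ => a₀) :=
      cert_pos Tc q Astar AA rr Cq hCq T hT Wt.toABox a₀ hWpos path hpath0 S1
        (fun p hp => Or.inl hp) (fun p hp => Or.inl (Or.inl hp)) N (Or.inr rfl)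
        (fun i hi => Or.inl (Or.inr ⟨i, hi, rfl⟩))
    have hneg2 : ¬ CertAns (GTBox.sem T) S2 q (fun _ => a₀) :=
      cert_neg_detached Tc sc q hconn Astar AA rr Cq hAA₁ hAA₂ hAA₃ hrr₁ hrr₂ hrr₃ T hT
        Wt.toABox a₀ hWsig hWneg path hpath0 hpathinj hpathfresh N S2 rfl rfl
    have hiff1 := hφ S1 hsig1 (consistent_any T S1) (fun _ => a₀)
    have hiff2 := hφ S2 hsig2 (consistent_any T S2) (fun _ => a₀)
    have hall1 : ∀ v : ℕ → I, (∀ i : Fin 1, v i.1 = a₀) → FO.Sat S1.concI S1.roleI φ v :=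
      hiff1.1 hcert1
    have hex2 : ∃ v : ℕ → I, (∀ i : Fin 1, v i.1 = a₀) ∧ ¬ FO.Sat S2.concI S2.roleI φ v := by
      by_contra hno
      push_neg at hno
      exact hneg2 (hiff2.2 hno)
    obtain ⟨v₂, hv₂0, hv₂sat⟩ := hex2
    set v₂' : ℕ → I := fun j => if j ∈ F then v₂ j else a₀ with hv₂'
    have hv₂'sat : ¬ FO.Sat S2.concI S2.roleI φ v₂' := by
      intro hs
      refine hv₂sat ((fo_sat_congr _ _ φ v₂ v₂' (fun x hx => ?_)).2 hs)
      simp only [hv₂']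
      rw [if_pos (hF ▸ hx)]
    -- pigeonhole: find a window free of pebble heights
    have hpig : ∃ j, j ≤ f ∧ ∀ x ∈ F, ¬(j*P + 1 ≤ chainHeight N chain (v₂' x) ∧
        chainHeight N chain (v₂' x) < (j+1)*P) := by
      by_contra hcon
      push_neg at hcon
      have hsub : Finset.range (f+1) ⊆
          (F.image (fun x => chainHeight N chain (v₂' x))).image (fun h => (h-1)/P) := by
        intro j hj
        rw [Finset.mem_range] at hj
        obtain ⟨x, hxF, hlo, hhi⟩ := hcon j (by omega)
        refine Finset.mem_image.2 ⟨chainHeight N chain (v₂' x), Finset.mem_image_of_mem _ hxF, ?_⟩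
        have hlo' : j * P ≤ chainHeight N chain (v₂' x) - 1 := by omega
        have hhi' : chainHeight N chain (v₂' x) - 1 < (j+1) * P :=
          lt_of_le_of_lt (Nat.sub_le _ _) hhi
        exact Nat.div_eq_of_lt_le hlo' (by rw [Nat.succ_mul]; rw [Nat.succ_mul] at hhi'; omega)
      have hc1 := Finset.card_le_card hsub
      rw [Finset.card_range] at hc1
      have hc2 := Finset.card_image_le (s := F.image (fun x => chainHeight N chain (v₂' x)))
        (f := fun h => (h-1)/P)
      have hc3 := Finset.card_image_le (s := F) (f := fun x => chainHeight N chain (v₂' x))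
      omega
    obtain ⟨j, hjf, hnowin⟩ := hpig
    set t := (j+1)*P with ht
    have hts : t = j*P + P := by rw [ht]; ring
    obtain ⟨JP, hJP⟩ : ∃ a, j * P = a := ⟨_, rfl⟩
    rw [hJP] at hts
    simp only [hJP] at hnowin
    have htf : t ≤ FP := by
      rw [← hFP, ht]
      exact mul_le_mul_left (by omega) P
    have hNt : t + 2^n < N := by omega
    have ht2n : 2^n < t := by omega
    set v₁ : ℕ → I := fun k => if t ≤ chainHeight N chain (v₂' k)
        then chainFlip N chain (v₂' k) else v₂' k with hv₁
    have hH0 : chainHeight N chain a₀ = 0 := by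
      rw [← hpath0]
      exact chainHeight_eq hinj false 0 (by omega)
    have hv₁0 : v₁ 0 = a₀ := by
      have h0 : v₂' 0 = a₀ := by
        simp only [hv₂']
        by_cases h0F : 0 ∈ F
        · rw [if_pos h0F]
          exact hv₂0 ⟨0, by omega⟩
        · rw [if_neg h0F]
      simp only [hv₁]
      rw [h0, hH0, if_neg (by omega)]
    have hsim : EFsim N chain n v₁ v₂' := by
      constructor
      · intro k
        by_cases hch : ∃ p : Bool × ℕ, p.2 ≤ N ∧ v₂' k = chain p.1 p.2
        · obtain ⟨⟨s, i⟩, hiN, he⟩ := hch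
          have hHk : chainHeight N chain (v₂' k) = i := by
            rw [he]; exact chainHeight_eq hinj s i hiN
          by_cases hti : t ≤ i
          · right
            refine ⟨s, i, by omega, hiN, ?_, he⟩
            simp only [hv₁]
            rw [hHk, if_pos hti, he, chainFlip_eq hinj s i hiN]
          · left
            constructor
            · simp only [hv₁]
              rw [hHk, if_neg hti]
            · intro s'' i'' hi'' he''
              have : i'' = i := (hinj s'' i'' s i hi'' hiN (he''.symm.trans he)).2
              omega
        · left
          have h0 : chainHeight N chain (v₂' k) = 0 := chainHeight_zero hch
          constructor
          · simp only [hv₁]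
            rw [h0, if_neg (by omega)]
          · intro s'' i'' hi'' he''
            exact absurd ⟨(s'', i''), hi'', he''⟩ hch
      · intro k l i i' hp hpc hq hqc
        obtain ⟨s, hiN, he⟩ := hpc
        obtain ⟨s', hi'N, he'⟩ := hqc
        have hHk : chainHeight N chain (v₂' k) = i := by
          rw [he]; exact chainHeight_eq hinj _ _ hiN
        have hHl : chainHeight N chain (v₂' l) = i' := by
          rw [he']; exact chainHeight_eq hinj _ _ hi'N
        have htl : t ≤ i' := by
          by_contra hcon
          apply hq
          simp only [hv₁]
          rw [hHl, if_neg (by omega)]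
        have htk : ¬ t ≤ i := by
          intro hcon
          have hv1k : v₁ k = chain (!s) i := by
            simp only [hv₁]
            rw [hHk, if_pos hcon, he, chainFlip_eq hinj _ _ hiN]
          rw [hv1k, he] at hp
          exact (Bool.not_ne_self s) (hinj _ _ _ _ hiN hiN hp).1
        by_cases hkF : k ∈ F
        · have hwink := hnowin k hkF
          rw [hHk] at hwink
          left
          omega
        · have hka : v₂' k = a₀ := by simp only [hv₂']; rw [if_neg hkF]
          have h0 : i = 0 := by
            have hcc : chain s i = chain false 0 := by
              rw [← he, hka, ← hpath0]
              exact (hchainF 0).symm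
            exact (hinj s i false 0 hiN (by omega) hcc).2
          left
          omega
    -- structural facts feeding EF_main
    have hcEq : ∀ c, c ≠ AA → S1.concI c = S2.concI c := by
      intro c hc
      ext a
      show (c, a) ∈ S1.conc ↔ (c, a) ∈ S2.conc
      constructor
      · rintro (h | h)
        · exact Or.inl h
        · rw [Set.mem_singleton_iff] at h
          injection h with h1 _
          exact absurd h1 hc
      · rintro (h | h)
        · exact Or.inl h
        · rw [Set.mem_singleton_iff] at h
          injection h with h1 _
          exact absurd h1 hc
    have hAAe1 : S1.concI AA = {chain false N} := by
      ext a
      show (AA, a) ∈ S1.conc ↔ _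
      constructor
      · rintro (h | h)
        · exact absurd (hWsig.1 _ h) hAA₁
        · rw [Set.mem_singleton_iff] at h
          have h2 : a = path N := congrArg Prod.snd h
          show a = chain false N
          rw [h2, hchainF]
      · intro h
        rw [Set.mem_singleton_iff] at h
        right
        rw [Set.mem_singleton_iff, h, hchainF]
    have hAAe2 : S2.concI AA = {chain true N} := by
      ext a
      show (AA, a) ∈ S2.conc ↔ _
      constructor
      · rintro (h | h)
        · exact absurd (hWsig.1 _ h) hAA₁
        · rw [Set.mem_singleton_iff] at h
          have h2 : a = path (2*N+1) := congrArg Prod.snd h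
          show a = chain true N
          rw [h2, hchTN]
      · intro h
        rw [Set.mem_singleton_iff] at h
        right
        rw [Set.mem_singleton_iff, h, hchTN]
    have hfreshI : ∀ s' i, 1 ≤ i → i ≤ N → chain s' i ∉ Wt.toABox.Ind := by
      intro s' i h1 hiN
      cases s'
      · rw [hchainF]; exact hpathfresh i (by omega)
      · rw [hchainT]; exact hpathfresh (N+1+i) (by omega)
    have hfresh : ∀ c, c ≠ AA → ∀ s' i, 1 ≤ i → i ≤ N → chain s' i ∉ S1.concI c := by
      intro c hc s' i h1 hiN hmem
      rcases hmem with h | h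
      · exact hfreshI s' i h1 hiN (Or.inl ⟨c, h⟩)
      · rw [Set.mem_singleton_iff] at h
        injection h with h1' _
        exact hc h1'
    have hrrE : S1.roleI rr = {p : I × I | ∃ s' i, i < N ∧ p = (chain s' i, chain s' (i+1))} := by
      ext ⟨a, b⟩
      show (rr, a, b) ∈ roleSet ↔ _
      constructor
      · rintro ((h | h) | h)
        · exact absurd (hWsig.2 _ h) hrr₁
        · obtain ⟨i, hi, heq⟩ := h
          have h2a : a = path i := congrArg (fun p => p.2.1) heq
          have h2b : b = path (i+1) := congrArg (fun p => p.2.2) heq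
          refine ⟨false, i, hi, ?_⟩
          rw [h2a, h2b, hchainF, hchainF]
        · obtain ⟨i, hi, heq⟩ := h
          have h2a : a = path (N+1+i) := congrArg (fun p => p.2.1) heq
          have h2b : b = path (N+2+i) := congrArg (fun p => p.2.2) heq
          refine ⟨true, i, hi, ?_⟩
          rw [h2a, h2b, hchainT, hchainT, show N+1+(i+1) = N+2+i from by ring]
      · rintro ⟨s', i, hi, heq⟩
        injection heq with h1 h2
        cases s'
        · refine Or.inl (Or.inr ⟨i, hi, ?_⟩)
          rw [h1, h2, hchainF, hchainF]
        · refine Or.inr ⟨i, hi, ?_⟩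
          rw [h1, h2, hchainT, hchainT, show N+1+(i+1) = N+2+i from by ring]
    have hiso : ∀ ρ, ρ ≠ rr → ∀ s' i, 1 ≤ i → i ≤ N →
        (∀ z, (chain s' i, z) ∉ S1.roleI ρ) ∧ (∀ z, (z, chain s' i) ∉ S1.roleI ρ) := by
      intro ρ hρ s' i h1 hiN
      constructor
      · intro z hz
        have hz' : (ρ, chain s' i, z) ∈ roleSet := hz
        rcases hz' with (h | h) | h
        · exact hfreshI s' i h1 hiN (Or.inr ⟨ρ, z, Or.inl h⟩)
        · obtain ⟨i', _, heq⟩ := h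
          injection heq with h1' _
          exact hρ h1'
        · obtain ⟨i', _, heq⟩ := h
          injection heq with h1' _
          exact hρ h1'
      · intro z hz
        have hz' : (ρ, z, chain s' i) ∈ roleSet := hz
        rcases hz' with (h | h) | h
        · exact hfreshI s' i h1 hiN (Or.inr ⟨ρ, z, Or.inr h⟩)
        · obtain ⟨i', _, heq⟩ := h
          injection heq with h1' _
          exact hρ h1'
        · obtain ⟨i', _, heq⟩ := h
          injection heq with h1' _
          exact hρ h1'
    have hEF := EF_main AA rr N chain hinj S1.concI S2.concI S1.roleI hcEq hAAe1 hAAe2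
      hfresh hrrE hiso φ n (le_of_eq hn.symm) h2nN v₁ v₂' hsim
    have hsat1 : FO.Sat S1.concI S1.roleI φ v₁ := by
      refine hall1 v₁ (fun i => ?_)
      have h01 : (i : ℕ) = 0 := by have := i.isLt; omega
      rw [h01]
      exact hv₁0
    exact hv₂'sat (hEF.1 hsat1)
  · intro k hk
    constructor
    · refine cert_pos Tc q Astar AA rr Cq hCq T hT Wt.toABox a₀ hWpos path hpath0
        _ Set.subset_union_left Set.subset_union_left k (Or.inr rfl) (fun i hi => Or.inr ⟨i, hi, rfl⟩)
    · refine cert_neg_trunc Tc sc q Astar AA rr Cq hAA₁ hAA₂ hAA₃ hrr₂ hrr₃ T hT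
        Wt.toABox a₀ hWsig hWneg _ rfl (fun p hp => ?_)
      rcases hp with hp | hp
      · exact Or.inr hp
      · obtain ⟨i, _, rfl⟩ := hp
        exact Or.inl rfl
end
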